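/- arXiv:1406.0092 — 3 statements merged into one kernel-verified Lean document; each statement's English description precedes it below -/
import Mathlib

section
/- Let f : (C^{n+1},0) → (C,0) have an isolated singularity, and define H^n(Ω̃•) = Ω^n/(Ω^n(X*) + dΩ^{n-1}) where Ω^n(X*) = {α ∈ Ω^n : df∧α ∈ fΩ^{n+1}}. Then wedging with df induces a well-defined injective linear map df∧ : H^n(Ω̃•) → Ω^{n+1}/(df∧dΩ^{n-1} + fΩ^{n+1}) whose image equals (df∧Ω^n + fΩ^{n+1})/(df∧dΩ^{n-1} + fΩ^{n+1}). -/
open MvPowerSeries Finset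

noncomputable section

/-- Ring of formal power series in `N` variables, modeling germs at the origin. -/
abbrev O (R : Type*) [CommRing R] (N : ℕ) : Type _ := MvPowerSeries (Fin N) R

/-- Build a power series from its coefficient function. -/
def PS.mk {R : Type*} [CommRing R] {N : ℕ} (c : (Fin N →₀ ℕ) → R) : O R N := c

variable {R : Type*} [CommRing R] {N : ℕ}

/-- Partial derivative of a formal power series. -/
def pd (i : Fin N) (f : O R N) : O R N :=
  PS.mk fun m => ((m i + 1 : ℕ) : R) * coeff (m + Finsupp.single i 1) f

/-- Substitution (composition) `f ∘ Φ`, correct when each `Φ i` has zero constant term. -/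
def psubst (Φ : Fin N → O R N) (f : O R N) : O R N :=
  PS.mk fun m =>
    ∑ k ∈ Finset.Iic (Finsupp.equivFunOnFinite.symm fun _ => m.sum fun _ e => e),
      coeff k f * coeff m (∏ i, Φ i ^ k i)

/-- Index set for `p`-forms: subsets of size `p` of the variables. -/
abbrev Idx (N p : ℕ) : Type := {s : Finset (Fin N) // s.card = p}

/-- Formal differential `p`-forms in `N` variables. -/
abbrev Form (R : Type*) [CommRing R] (N p : ℕ) : Type _ := Idx N p → O R N

/-- Sign of inserting index `i` into the monomial `dx_s`. -/
def sgn (i : Fin N) (s : Finset (Fin N)) : ℤ := (-1) ^ (s.filter (· < i)).card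

/-- Wedge of the 1-form `∑ a i dx_i` with a `p`-form. -/
def wedge1 (a : Fin N → O R N) {p : ℕ} (ω : Form R N p) : Form R N (p + 1) :=
  fun s => ∑ i ∈ s.1.attach,
    (sgn i.1 (s.1.erase i.1) : ℤ) •
      (a i.1 * ω ⟨s.1.erase i.1, by simp [Finset.card_erase_of_mem i.2, s.2]⟩)

/-- Exterior derivative. -/
def formD {p : ℕ} (ω : Form R N p) : Form R N (p + 1) :=
  fun s => ∑ i ∈ s.1.attach,
    (sgn i.1 (s.1.erase i.1) : ℤ) •
      pd i.1 (ω ⟨s.1.erase i.1, by simp [Finset.card_erase_of_mem i.2, s.2]⟩)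

/-- `df ∧ ·`. -/
def dfW (f : O R N) {p : ℕ} (ω : Form R N p) : Form R N (p + 1) :=
  wedge1 (fun i => pd i f) ω

/-- Multiplication of a form by a function. -/
def fmul (f : O R N) {p : ℕ} (ω : Form R N p) : Form R N p := fun s => f * ω s

/-- Interior product `v ⌟ ω`. -/
def iprod (v : Fin N → O R N) {p : ℕ} (ω : Form R N (p + 1)) : Form R N p :=
  fun s => ∑ i ∈ s.1ᶜ.attach,
    (sgn i.1 s.1 : ℤ) •
      (v i.1 * ω ⟨insert i.1 s.1, by
        simp [Finset.card_insert_of_notMem (Finset.mem_compl.mp i.2), s.2]⟩)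

/-- Pullback of a `p`-form under the formal map `Φ`. -/
def pull (Φ : Fin N → O R N) {p : ℕ} (ω : Form R N p) : Form R N p :=
  fun s => ∑ t : Idx N p,
    psubst Φ (ω t) *
      Matrix.det (fun k l : Fin p =>
        pd (s.1.orderIsoOfFin s.2 k : Fin N) (Φ (t.1.orderIsoOfFin t.2 l : Fin N)))

/-- `Φ` is a formal diffeomorphism germ tangent to the identity. -/
def TangentId (Φ : Fin N → O R N) : Prop :=
  (∀ i, constantCoeff (Φ i) = 0) ∧
    ∀ i j, coeff (Finsupp.single j 1) (Φ i) = if i = j then 1 else 0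

section ComplexHelpers

variable {N : ℕ}

/-- The subspace `df ∧ Ω^p ⊆ Ω^{p+1}`. -/
def dfWedgeSub (f : O ℂ N) (p : ℕ) : Submodule ℂ (Form ℂ N (p + 1)) :=
  Submodule.span ℂ (Set.range fun α : Form ℂ N p => dfW f α)

/-- The subspace `f·Ω^p ⊆ Ω^p`. -/
def fMulSub (f : O ℂ N) (p : ℕ) : Submodule ℂ (Form ℂ N p) :=
  Submodule.span ℂ (Set.range fun ω : Form ℂ N p => fmul f ω)

/-- The subspace `df ∧ dΩ^p ⊆ Ω^{p+2}`. -/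
def dfdSub (f : O ℂ N) (p : ℕ) : Submodule ℂ (Form ℂ N (p + 2)) :=
  Submodule.span ℂ (Set.range fun β : Form ℂ N p => dfW f (formD β))

/-- The subspace `dΩ^p ⊆ Ω^{p+1}` of exact forms. -/
def dSub (N p : ℕ) : Submodule ℂ (Form ℂ N (p + 1)) :=
  Submodule.span ℂ (Set.range fun β : Form ℂ N p => formD β)

/-- `Ω^p(X*)`: forms whose restriction to the smooth part of `X = {f = 0}` vanishes,
characterized algebraically as `{α | df ∧ α ∈ f·Ω^{p+1}}`. -/
def vanSub (f : O ℂ N) (p : ℕ) : Submodule ℂ (Form ℂ N p) :=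
  Submodule.span ℂ {α : Form ℂ N p | ∃ β : Form ℂ N (p + 1), dfW f α = fmul f β}

/-- `f : (ℂ^{m+2},0) → (ℂ,0)` has an isolated singularity at the origin:
`f(0) = 0` and the Milnor algebra `Ω^{m+2}/df∧Ω^{m+1}` is finite dimensional. -/
def IsolatedSing (m : ℕ) (f : O ℂ (m + 2)) : Prop :=
  constantCoeff f = 0 ∧
    FiniteDimensional ℂ (Form ℂ (m + 2) (m + 2) ⧸ dfWedgeSub f (m + 1))

/-- The Milnor number `μ = dim Ω^{n+1}/df∧Ω^n`. -/
def μdim (m : ℕ) (f : O ℂ (m + 2)) : ℕ :=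
  Module.finrank ℂ (Form ℂ (m + 2) (m + 2) ⧸ dfWedgeSub f (m + 1))

/-- The Tjurina number `τ = dim Ω^{n+1}/(df∧Ω^n + fΩ^{n+1})`. -/
def τdim (m : ℕ) (f : O ℂ (m + 2)) : ℕ :=
  Module.finrank ℂ (Form ℂ (m + 2) (m + 2) ⧸ (dfWedgeSub f (m + 1) ⊔ fMulSub f (m + 2)))

end ComplexHelpers

-- now aux linear maps
section Lin
variable {N : ℕ}

lemma coeff_PSmk (c : (Fin N →₀ ℕ) → ℂ) (m) : coeff m (PS.mk c) = c m := rfl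

def pdL (i : Fin N) : O ℂ N →ₗ[ℂ] O ℂ N where
  toFun := pd i
  map_add' g h := by
    ext m
    simp [pd, coeff_PSmk, map_add, mul_add]
  map_smul' c g := by
    ext m
    simp [pd, coeff_PSmk]
    ring

def wedge1L (a : Fin N → O ℂ N) (p : ℕ) : Form ℂ N p →ₗ[ℂ] Form ℂ N (p + 1) where
  toFun := wedge1 a
  map_add' ω η := by
    funext s
    simp [wedge1, mul_add, smul_add, Finset.sum_add_distrib]
  map_smul' c ω := by
    funext s
    simp only [wedge1, Pi.smul_apply, RingHom.id_apply, Finset.smul_sum,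
      mul_smul_comm, smul_comm (_ : ℤ) c]

lemma pd_add (i : Fin N) (g h : O ℂ N) : pd i (g + h) = pd i g + pd i h :=
  map_add (pdL i) g h

lemma pd_smul (i : Fin N) (c : ℂ) (g : O ℂ N) : pd i (c • g) = c • pd i g :=
  map_smul (pdL i) c g

def formDL (p : ℕ) : Form ℂ N p →ₗ[ℂ] Form ℂ N (p + 1) where
  toFun := formD
  map_add' ω η := by
    funext s
    simp only [formD, Pi.add_apply]
    rw [← Finset.sum_add_distrib]
    refine Finset.sum_congr rfl fun i _ => ?_
    rw [pd_add, smul_add]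
  map_smul' c ω := by
    funext s
    simp only [formD, Pi.smul_apply, RingHom.id_apply, Finset.smul_sum]
    refine Finset.sum_congr rfl fun i _ => ?_
    rw [pd_smul, smul_comm (_ : ℤ) c]

def fmulL (f : O ℂ N) (p : ℕ) : Form ℂ N p →ₗ[ℂ] Form ℂ N p where
  toFun := fmul f
  map_add' ω η := by funext s; simp [fmul, mul_add]
  map_smul' c ω := by funext s; simp [fmul, mul_smul_comm]

end Lin

section Subs
variable {N : ℕ} (f : O ℂ N)

/-- `df∧·` as a linear map. -/
def dfWL (f : O ℂ N) (p : ℕ) : Form ℂ N p →ₗ[ℂ] Form ℂ N (p + 1) :=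
  wedge1L (fun i => pd i f) p

lemma dfWL_apply (p : ℕ) (α : Form ℂ N p) : dfWL f p α = dfW f α := rfl
lemma fmulL_apply (p : ℕ) (α : Form ℂ N p) : fmulL f p α = fmul f α := rfl
lemma formDL_apply (p : ℕ) (α : Form ℂ N p) : formDL p α = formD α := rfl

lemma span_range_eq {M M' : Type*} [AddCommGroup M] [AddCommGroup M'] [Module ℂ M]
    [Module ℂ M'] (G : M →ₗ[ℂ] M') (g : M → M') (hg : ∀ x, g x = G x) :
    Submodule.span ℂ (Set.range g) = LinearMap.range G := by
  have : Set.range g = ↑(LinearMap.range G) := by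
    ext y; simp [hg]
  rw [this, Submodule.span_eq]

lemma fMulSub_eq (p : ℕ) : fMulSub f p = LinearMap.range (fmulL f p) :=
  span_range_eq _ _ fun _ => rfl

lemma dfWedgeSub_eq (p : ℕ) : dfWedgeSub f p = LinearMap.range (dfWL f (p)) :=
  span_range_eq _ _ fun _ => rfl

lemma dfdSub_eq (p : ℕ) : dfdSub f p = LinearMap.range (dfWL f (p + 1) ∘ₗ formDL p) :=
  span_range_eq _ _ fun _ => rfl

lemma dSub_eq (p : ℕ) : dSub N p = LinearMap.range (formDL (N := N) p) :=
  span_range_eq _ _ fun _ => rfl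

lemma vanSub_eq (p : ℕ) :
    vanSub f p = Submodule.comap (dfWL f p) (LinearMap.range (fmulL f (p + 1))) := by
  rw [vanSub]
  have h : {α : Form ℂ N p | ∃ β : Form ℂ N (p + 1), dfW f α = fmul f β} =
      ↑(Submodule.comap (dfWL f p) (LinearMap.range (fmulL f (p + 1)))) := by
    ext α
    constructor
    · rintro ⟨β, hβ⟩
      exact ⟨β, hβ.symm⟩
    · rintro ⟨β, hβ⟩
      exact ⟨β, hβ.symm⟩
  rw [h, Submodule.span_eq]

end Subs


/-- wedging with `df` induces a well-defined injective linear map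
`df∧ : H^n(Ω̃•) = Ω^n/(Ω^n(X*) + dΩ^{n-1}) → Ω^{n+1}/(df∧dΩ^{n-1} + fΩ^{n+1})`
whose image is `(df∧Ω^n + fΩ^{n+1})/(df∧dΩ^{n-1} + fΩ^{n+1})`  (here `n = m+1`). -/
theorem df_wedge_injective_image (m : ℕ) (f : O ℂ (m + 2))
    (hiso : IsolatedSing m f)
    (K : Submodule ℂ (Form ℂ (m + 2) (m + 1)))
    (hK : K = vanSub f (m + 1) ⊔ dSub (m + 2) m)
    (A : Submodule ℂ (Form ℂ (m + 2) (m + 2)))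
    (hA : A = dfdSub f m ⊔ fMulSub f (m + 2)) :
    ∃ L : (Form ℂ (m + 2) (m + 1) ⧸ K) →ₗ[ℂ] (Form ℂ (m + 2) (m + 2) ⧸ A),
      (∀ α : Form ℂ (m + 2) (m + 1), L (K.mkQ α) = A.mkQ (dfW f α)) ∧
      Function.Injective L ∧
      LinearMap.range L = (dfWedgeSub f (m + 1) ⊔ fMulSub f (m + 2)).map A.mkQ := by
  classical
  set W := dfWL f (m + 1)
  set T : Form ℂ (m + 2) (m + 1) →ₗ[ℂ] (Form ℂ (m + 2) (m + 2) ⧸ A) := A.mkQ ∘ₗ W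
  -- K = ker T
  have hKer : K = LinearMap.ker T := by
    apply le_antisymm
    · rw [hK, sup_le_iff]
      constructor
      · rw [vanSub_eq]
        rintro α ⟨β, hβ⟩
        have : W α ∈ A := by
          rw [hA]
          exact Submodule.mem_sup_right (by rw [fMulSub_eq]; exact ⟨β, hβ⟩)
        simpa [T, LinearMap.mem_ker, Submodule.Quotient.mk_eq_zero] using this
      · rw [dSub_eq]
        rintro _ ⟨β, rfl⟩
        have : W (formDL m β) ∈ A := by
          rw [hA]
          exact Submodule.mem_sup_left (by rw [dfdSub_eq]; exact ⟨β, rfl⟩)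
        simpa [T, LinearMap.mem_ker, Submodule.Quotient.mk_eq_zero] using this
    · intro α hα
      have hWα : W α ∈ A := by
        simpa [T, LinearMap.mem_ker, Submodule.Quotient.mk_eq_zero] using hα
      rw [hA, dfdSub_eq, fMulSub_eq] at hWα
      rcases Submodule.mem_sup.mp hWα with ⟨y, ⟨β, rfl⟩, z, ⟨γ, rfl⟩, hyz⟩
      have hvan : α - formDL m β ∈ vanSub f (m + 1) := by
        rw [vanSub_eq]
        refine ⟨γ, ?_⟩
        rw [map_sub]
        simp only [LinearMap.coe_comp, Function.comp_apply] at hyz ⊢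
        rw [← hyz]
        abel
      rw [hK]
      have : α = (α - formDL m β) + formDL m β := by abel
      rw [this]
      exact add_mem (Submodule.mem_sup_left hvan)
        (Submodule.mem_sup_right (by rw [dSub_eq]; exact ⟨β, rfl⟩))
  refine ⟨K.liftQ T (le_of_eq hKer), fun α => rfl, ?_, ?_⟩
  · rw [← LinearMap.ker_eq_bot]
    exact Submodule.ker_liftQ_eq_bot K T _ (le_of_eq hKer.symm)
  · rw [Submodule.range_liftQ, dfWedgeSub_eq, fMulSub_eq, Submodule.map_sup]
    have h1 : Submodule.map A.mkQ (LinearMap.range (fmulL f (m + 2))) = ⊥ := by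
      rw [eq_bot_iff]
      rintro _ ⟨x, hx, rfl⟩
      have hxA : x ∈ A := by
        rw [hA]
        exact Submodule.mem_sup_right (by rw [fMulSub_eq]; exact hx)
      simpa [Submodule.Quotient.mk_eq_zero] using hxA
    rw [h1, sup_bot_eq]
    exact (LinearMap.range_comp W A.mkQ).symm ▸ (LinearMap.range_comp _ _)
end
end

section
/- Interpolation lemma: let Φ be a germ of a formal (or analytic) diffeomorphism of (R^{n+1},0) tangent to the identity (Φ(x) = x mod m^2). Then there exists a one-parameter family Φ_t of formal diffeomorphisms, with coefficients polynomial in t, satisfying Φ_0 = Id, Φ_1 = Φ, and Φ'_t = Φ'_0 ∘ Φ_t. -/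
open MvPowerSeries Finset

noncomputable section

variable {R : Type*} [CommRing R] {N : ℕ}

section Families

variable {N : ℕ}

/-- Evaluate a family (coefficients polynomial in `t`) at time `t = r`. -/
def evalAt (r : ℝ) : O (Polynomial ℝ) N →+* O ℝ N :=
  MvPowerSeries.map (Polynomial.evalRingHom r)

/-- A time-independent power series, viewed as a constant family. -/
def toPoly : O ℝ N →+* O (Polynomial ℝ) N :=
  MvPowerSeries.map (Polynomial.C)

/-- Coefficientwise derivative in `t` of a family. -/
def tder (φ : O (Polynomial ℝ) N) : O (Polynomial ℝ) N :=
  PS.mk fun m => Polynomial.derivative (coeff m φ)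

/-- `∫₀¹ P(t) dt` for a polynomial `P`. -/
def intPoly (P : Polynomial ℝ) : ℝ :=
  ∑ k ∈ Finset.range (P.natDegree + 1), P.coeff k / (k + 1)

/-- Coefficientwise integral `∫₀¹ · dt` of a family of power series. -/
def intO (φ : O (Polynomial ℝ) N) : O ℝ N :=
  PS.mk fun m => intPoly (coeff m φ)

/-- Componentwise integral `∫₀¹ · dt` of a family of forms. -/
def intF {p : ℕ} (ω : Form (Polynomial ℝ) N p) : Form ℝ N p :=
  fun s => intO (ω s)

/-- Componentwise time-`r` evaluation of a family of forms. -/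
def evalAtF (r : ℝ) {p : ℕ} (ω : Form (Polynomial ℝ) N p) : Form ℝ N p :=
  fun s => evalAt r (ω s)

/-- A form viewed as a constant family. -/
def toPolyF {p : ℕ} (ω : Form ℝ N p) : Form (Polynomial ℝ) N p :=
  fun s => toPoly (ω s)

end Families

/-! ### Auxiliary development for the interpolation theorem -/

namespace Sternberg

open Finsupp in
/-- total degree of a monomial -/
abbrev deg {N : ℕ} (m : Fin N →₀ ℕ) : ℕ := m.sum fun _ e => e

variable {R : Type*} [CommRing R] {N : ℕ}

lemma coeff_mk (c : (Fin N →₀ ℕ) → R) (m : Fin N →₀ ℕ) : coeff (R := R) m (PS.mk c) = c m := rfl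

lemma deg_eq_degree (m : Fin N →₀ ℕ) : deg m = Finsupp.degree m := rfl

lemma deg_add (a b : Fin N →₀ ℕ) : deg (a + b) = deg a + deg b :=
  Finsupp.sum_add_index' (fun _ => rfl) (fun _ _ _ => rfl)

lemma le_deg (i : Fin N) (m : Fin N →₀ ℕ) : m i ≤ deg m := by
  rw [deg_eq_degree]; exact Finsupp.le_degree i m

lemma deg_eq_zero {m : Fin N →₀ ℕ} : deg m = 0 ↔ m = 0 := by
  rw [deg_eq_degree]; exact Finsupp.degree_eq_zero_iff m

lemma deg_single (i : Fin N) (n : ℕ) : deg (Finsupp.single i n) = n := by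
  simp [deg, Finsupp.sum_single_index]

lemma deg_eq_one {m : Fin N →₀ ℕ} (h : deg m = 1) : ∃ j, m = Finsupp.single j 1 := by
  have hne : m ≠ 0 := by intro h0; rw [h0] at h; simp [deg] at h
  obtain ⟨j, hj⟩ := Finsupp.ne_iff.mp hne
  simp only [Finsupp.coe_zero, Pi.zero_apply] at hj
  have hj1 : m j = 1 := le_antisymm (h ▸ le_deg j m) (Nat.one_le_iff_ne_zero.mpr hj)
  refine ⟨j, Finsupp.ext fun l => ?_⟩
  rcases eq_or_ne l j with rfl | hlj
  · simp [hj1]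
  · rw [Finsupp.single_apply, if_neg (Ne.symm hlj)]
    by_contra hl
    have hl1 : 1 ≤ m l := Nat.one_le_iff_ne_zero.mpr hl
    have : 2 ≤ deg m := by
      have hsub : {j, l} ⊆ m.support := by
        intro x hx
        simp only [Finset.mem_insert, Finset.mem_singleton] at hx
        rcases hx with rfl | rfl <;> simp [Finsupp.mem_support_iff, hj, hl]
      calc 2 ≤ ∑ x ∈ ({j, l} : Finset (Fin N)), m x := by
              rw [Finset.sum_insert (by simpa using hlj.symm), Finset.sum_singleton, hj1]; omega
        _ ≤ ∑ x ∈ m.support, m x := Finset.sum_le_sum_of_subset hsub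
        _ = deg m := rfl
    omega

/-- order at least `n` -/
def OrdGE (n : ℕ) (f : O R N) : Prop := ∀ m : Fin N →₀ ℕ, deg m < n → coeff (R := R) m f = 0

lemma OrdGE.mono {n n' : ℕ} (h : n' ≤ n) {f : O R N} (hf : OrdGE n f) : OrdGE n' f :=
  fun m hm => hf m (lt_of_lt_of_le hm h)

lemma OrdGE_X (i : Fin N) : OrdGE 1 (X i : O R N) := by
  intro m hm
  rw [Nat.lt_one_iff, deg_eq_zero] at hm
  subst hm
  rw [MvPowerSeries.coeff_zero_eq_constantCoeff_apply, MvPowerSeries.constantCoeff_X]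

lemma OrdGE.mul {a b : ℕ} {f g : O R N} (hf : OrdGE a f) (hg : OrdGE b g) :
    OrdGE (a + b) (f * g) := by
  intro m hm
  rw [MvPowerSeries.coeff_mul]
  refine Finset.sum_eq_zero fun p hp => ?_
  rw [Finset.HasAntidiagonal.mem_antidiagonal] at hp
  have hd : deg p.1 + deg p.2 = deg m := by rw [← deg_add, hp]
  rcases lt_or_ge (deg p.1) a with h1 | h1
  · rw [hf p.1 h1, zero_mul]
  · rw [hg p.2 (by omega), mul_zero]

lemma OrdGE_one_pow {f : O R N} (hf : OrdGE 1 f) (n : ℕ) : OrdGE n (f ^ n) := by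
  induction n with
  | zero => intro m hm; omega
  | succ k ih => rw [pow_succ]; exact (ih.mul hf)

lemma OrdGE_prod_pow {Ψ : Fin N → O R N} (hΨ : ∀ i, OrdGE 1 (Ψ i)) (k : Fin N →₀ ℕ) :
    OrdGE (deg k) (∏ i, Ψ i ^ k i) := by
  have : deg k = ∑ i, k i := Finsupp.sum_fintype _ _ (fun _ => rfl)
  rw [this]
  classical
  induction (Finset.univ : Finset (Fin N)) using Finset.induction with
  | empty => intro m hm; rw [Finset.sum_empty] at hm; omega
  | insert _ _ hx ih =>
      rw [Finset.prod_insert hx, Finset.sum_insert hx]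
      exact (OrdGE_one_pow (hΨ _) _).mul ih

end Sternberg

namespace Sternberg

variable {R : Type*} [CommRing R] {N : ℕ}

lemma coeff_pd (i : Fin N) (f : O R N) (m : Fin N →₀ ℕ) :
    coeff (R := R) m (pd i f) = ((m i + 1 : ℕ) : R) * coeff (R := R) (m + Finsupp.single i 1) f := rfl

lemma pd_add (i : Fin N) (f g : O R N) : pd i (f + g) = pd i f + pd i g := by
  ext m
  simp only [coeff_pd, map_add, mul_add]

lemma pd_zero (i : Fin N) : pd i (0 : O R N) = 0 := by
  ext m; simp [coeff_pd]

lemma pd_one (i : Fin N) : pd i (1 : O R N) = 0 := by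
  classical
  ext m
  rw [coeff_pd, MvPowerSeries.coeff_one, if_neg, mul_zero, map_zero]
  intro h
  have := DFunLike.congr_fun h i
  simp [Finsupp.single_apply] at this

lemma pd_C (i : Fin N) (c : R) : pd i (MvPowerSeries.C (σ := Fin N) (R := R) c) = 0 := by
  classical
  ext m
  rw [coeff_pd, MvPowerSeries.coeff_C, if_neg, mul_zero, map_zero]
  intro h
  have := DFunLike.congr_fun h i
  simp [Finsupp.single_apply] at this

lemma pd_X (i j : Fin N) : pd i (X j : O R N) = if j = i then 1 else 0 := by
  classical
  ext m
  rw [coeff_pd, MvPowerSeries.coeff_X]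
  by_cases hij : j = i
  · rw [hij, if_pos rfl]
    rcases eq_or_ne m 0 with rfl | hm
    · simp
    · rw [if_neg, MvPowerSeries.coeff_one, if_neg hm, mul_zero]
      intro h
      have : deg (m + Finsupp.single i 1) = deg (Finsupp.single i 1) := by rw [h]
      rw [deg_add, deg_single] at this
      exact hm (deg_eq_zero.mp (by omega))
  · rw [if_neg, if_neg hij, map_zero, mul_zero]
    intro h
    have := DFunLike.congr_fun h i
    simp only [Finsupp.add_apply, Finsupp.single_eq_same, Finsupp.single_apply,
      if_neg hij] at this
    omega

/-- key combinatorial step for the Leibniz rule, first component -/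
private lemma sum_shift (i : Fin N) (m : Fin N →₀ ℕ) (F : (Fin N →₀ ℕ) → (Fin N →₀ ℕ) → R) :
    ∑ p ∈ antidiagonal m, ((p.1 i + 1 : ℕ) : R) * F (p.1 + Finsupp.single i 1) p.2
      = Finset.sum (antidiagonal (m + Finsupp.single i 1))
          (fun q : (Fin N →₀ ℕ) × (Fin N →₀ ℕ) => ((q.1 i : ℕ) : R) * F q.1 q.2) := by
  classical
  have key : ∑ p ∈ antidiagonal m, ((p.1 i + 1 : ℕ) : R) * F (p.1 + Finsupp.single i 1) p.2
      = Finset.sum ((antidiagonal (m + Finsupp.single i 1)).filter (fun q => q.1 i ≠ 0))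
          (fun q : (Fin N →₀ ℕ) × (Fin N →₀ ℕ) => ((q.1 i : ℕ) : R) * F q.1 q.2) := by
    refine Finset.sum_nbij' (fun p => (p.1 + Finsupp.single i 1, p.2))
      (fun q => (q.1 - Finsupp.single i 1, q.2)) ?_ ?_ ?_ ?_ ?_
    · intro p hp
      rw [Finset.HasAntidiagonal.mem_antidiagonal] at hp
      rw [Finset.mem_filter, Finset.HasAntidiagonal.mem_antidiagonal]
      constructor
      · rw [← hp, add_right_comm]
      · simp
    · intro q hq
      rw [Finset.mem_filter, Finset.HasAntidiagonal.mem_antidiagonal] at hq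
      rw [Finset.HasAntidiagonal.mem_antidiagonal]
      have hle : Finsupp.single i 1 ≤ q.1 := by
        rw [Finsupp.single_le_iff]; omega
      have hc : q.1 - Finsupp.single i 1 + Finsupp.single i 1 = q.1 := tsub_add_cancel_of_le hle
      have h2 : q.1 - Finsupp.single i 1 + q.2 + Finsupp.single i 1 = m + Finsupp.single i 1 := by
        rw [add_right_comm, hc, hq.1]
      exact add_right_cancel h2
    · intro p hp
      rw [Prod.ext_iff]
      exact ⟨add_tsub_cancel_right _ _, rfl⟩
    · intro q hq
      rw [Finset.mem_filter, Finset.HasAntidiagonal.mem_antidiagonal] at hq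
      have hle : Finsupp.single i 1 ≤ q.1 := by
        rw [Finsupp.single_le_iff]; omega
      rw [Prod.ext_iff]
      exact ⟨tsub_add_cancel_of_le hle, rfl⟩
    · intro p hp
      simp
  rw [key]
  exact Finset.sum_filter_of_ne (by
    intro q hq hne h0
    rw [h0] at hne
    simp at hne)

/-- key combinatorial step for the Leibniz rule, second component -/
private lemma sum_shift2 (i : Fin N) (m : Fin N →₀ ℕ) (F : (Fin N →₀ ℕ) → (Fin N →₀ ℕ) → R) :
    ∑ p ∈ antidiagonal m, ((p.2 i + 1 : ℕ) : R) * F p.1 (p.2 + Finsupp.single i 1)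
      = Finset.sum (antidiagonal (m + Finsupp.single i 1))
          (fun q : (Fin N →₀ ℕ) × (Fin N →₀ ℕ) => ((q.2 i : ℕ) : R) * F q.1 q.2) := by
  classical
  have key : ∑ p ∈ antidiagonal m, ((p.2 i + 1 : ℕ) : R) * F p.1 (p.2 + Finsupp.single i 1)
      = Finset.sum ((antidiagonal (m + Finsupp.single i 1)).filter (fun q => q.2 i ≠ 0))
          (fun q : (Fin N →₀ ℕ) × (Fin N →₀ ℕ) => ((q.2 i : ℕ) : R) * F q.1 q.2) := by
    refine Finset.sum_nbij' (fun p => (p.1, p.2 + Finsupp.single i 1))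
      (fun q => (q.1, q.2 - Finsupp.single i 1)) ?_ ?_ ?_ ?_ ?_
    · intro p hp
      rw [Finset.HasAntidiagonal.mem_antidiagonal] at hp
      rw [Finset.mem_filter, Finset.HasAntidiagonal.mem_antidiagonal]
      constructor
      · rw [← hp, add_assoc]
      · simp
    · intro q hq
      rw [Finset.mem_filter, Finset.HasAntidiagonal.mem_antidiagonal] at hq
      rw [Finset.HasAntidiagonal.mem_antidiagonal]
      have hle : Finsupp.single i 1 ≤ q.2 := by
        rw [Finsupp.single_le_iff]; omega
      have hc : q.2 - Finsupp.single i 1 + Finsupp.single i 1 = q.2 := tsub_add_cancel_of_le hle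
      have h2 : q.1 + (q.2 - Finsupp.single i 1) + Finsupp.single i 1 = m + Finsupp.single i 1 := by
        rw [add_assoc, hc, hq.1]
      exact add_right_cancel h2
    · intro p hp
      rw [Prod.ext_iff]
      exact ⟨rfl, add_tsub_cancel_right _ _⟩
    · intro q hq
      rw [Finset.mem_filter, Finset.HasAntidiagonal.mem_antidiagonal] at hq
      have hle : Finsupp.single i 1 ≤ q.2 := by
        rw [Finsupp.single_le_iff]; omega
      rw [Prod.ext_iff]
      exact ⟨rfl, tsub_add_cancel_of_le hle⟩
    · intro p hp
      simp
  rw [key]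
  exact Finset.sum_filter_of_ne (by
    intro q hq hne h0
    rw [h0] at hne
    simp at hne)

lemma pd_mul (i : Fin N) (f g : O R N) : pd i (f * g) = pd i f * g + f * pd i g := by
  classical
  ext m
  rw [map_add, coeff_pd, MvPowerSeries.coeff_mul, MvPowerSeries.coeff_mul,
    MvPowerSeries.coeff_mul]
  have h1 : ∑ p ∈ antidiagonal m, coeff (R := R) p.1 (pd i f) * coeff (R := R) p.2 g
      = Finset.sum (antidiagonal (m + Finsupp.single i 1))
          (fun q : (Fin N →₀ ℕ) × (Fin N →₀ ℕ) => ((q.1 i : ℕ) : R) * (coeff (R := R) q.1 f * coeff (R := R) q.2 g)) := by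
    rw [← sum_shift i m (fun a b => coeff (R := R) a f * coeff (R := R) b g)]
    refine Finset.sum_congr rfl fun p hp => ?_
    rw [coeff_pd]; ring
  have h2 : ∑ p ∈ antidiagonal m, coeff (R := R) p.1 f * coeff (R := R) p.2 (pd i g)
      = Finset.sum (antidiagonal (m + Finsupp.single i 1))
          (fun q : (Fin N →₀ ℕ) × (Fin N →₀ ℕ) => ((q.2 i : ℕ) : R) * (coeff (R := R) q.1 f * coeff (R := R) q.2 g)) := by
    rw [← sum_shift2 i m (fun a b => coeff (R := R) a f * coeff (R := R) b g)]
    refine Finset.sum_congr rfl fun p hp => ?_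
    rw [coeff_pd]; ring
  rw [h1, h2, ← Finset.sum_add_distrib, Finset.mul_sum]
  refine Finset.sum_congr rfl fun q hq => ?_
  rw [Finset.HasAntidiagonal.mem_antidiagonal] at hq
  have : q.1 i + q.2 i = m i + 1 := by
    have := DFunLike.congr_fun hq i
    simpa using this
  have hcast : ((m i + 1 : ℕ) : R) = ((q.1 i : ℕ) : R) + ((q.2 i : ℕ) : R) := by
    rw [← Nat.cast_add, this]
  rw [hcast]; ring

end Sternberg

namespace Sternberg

variable {R : Type*} [CommRing R] {N : ℕ}

/-- the derivation associated to a vector field -/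
def Dv (V : Fin N → O R N) (f : O R N) : O R N := ∑ i, V i * pd i f

variable (V : Fin N → O R N)

lemma Dv_add (f g : O R N) : Dv V (f + g) = Dv V f + Dv V g := by
  unfold Dv
  rw [← Finset.sum_add_distrib]
  refine Finset.sum_congr rfl fun i _ => ?_
  rw [pd_add, mul_add]

lemma Dv_zero : Dv V (0 : O R N) = 0 := by
  unfold Dv
  refine Finset.sum_eq_zero fun i _ => ?_
  rw [pd_zero, mul_zero]

lemma Dv_one : Dv V (1 : O R N) = 0 := by
  unfold Dv
  refine Finset.sum_eq_zero fun i _ => ?_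
  rw [pd_one, mul_zero]

lemma Dv_C (c : R) : Dv V (MvPowerSeries.C (σ := Fin N) (R := R) c) = 0 := by
  unfold Dv
  refine Finset.sum_eq_zero fun i _ => ?_
  rw [pd_C, mul_zero]

lemma Dv_mul (f g : O R N) : Dv V (f * g) = Dv V f * g + f * Dv V g := by
  unfold Dv
  rw [Finset.sum_mul, Finset.mul_sum, ← Finset.sum_add_distrib]
  refine Finset.sum_congr rfl fun i _ => ?_
  rw [pd_mul]; ring

lemma Dv_sum {α : Type*} (s : Finset α) (F : α → O R N) :
    Dv V (∑ x ∈ s, F x) = ∑ x ∈ s, Dv V (F x) := by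
  classical
  induction s using Finset.induction with
  | empty => simpa using Dv_zero V
  | insert _ _ hx ih => rw [Finset.sum_insert hx, Finset.sum_insert hx, Dv_add, ih]

lemma Dv_X (i : Fin N) : Dv V (X i : O R N) = V i := by
  classical
  unfold Dv
  rw [Finset.sum_eq_single i]
  · rw [pd_X, if_pos rfl, mul_one]
  · intro j _ hji
    rw [pd_X, if_neg, mul_zero]
    exact fun h => hji h.symm
  · intro h; exact absurd (Finset.mem_univ i) h

lemma Dv_smul (c : ℝ) (f : O ℝ N) (W : Fin N → O ℝ N) : Dv W (c • f) = c • Dv W f := by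
  unfold Dv
  rw [Finset.smul_sum]
  refine Finset.sum_congr rfl fun i _ => ?_
  have hpd : pd i (c • f) = c • pd i f := by
    ext m
    rw [coeff_pd, MvPowerSeries.coeff_smul, MvPowerSeries.coeff_smul, coeff_pd]
    ring
  rw [hpd, mul_smul_comm]

lemma OrdGE_Dv {n : ℕ} {f : O R N} (hV : ∀ i, OrdGE 2 (V i)) (hf : OrdGE n f) :
    OrdGE (n + 1) (Dv V f) := by
  intro m hm
  unfold Dv
  rw [map_sum]
  refine Finset.sum_eq_zero fun i _ => ?_
  rw [MvPowerSeries.coeff_mul]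
  refine Finset.sum_eq_zero fun p hp => ?_
  rw [Finset.HasAntidiagonal.mem_antidiagonal] at hp
  have hd : deg p.1 + deg p.2 = deg m := by rw [← deg_add, hp]
  by_cases h2 : deg p.1 < 2
  · rw [hV i p.1 h2, zero_mul]
  · rw [coeff_pd, hf _ (by rw [deg_add, deg_single]; omega), mul_zero, mul_zero]

lemma OrdGE_Dv_iterate {n : ℕ} {f : O R N} (hV : ∀ i, OrdGE 2 (V i)) (hf : OrdGE n f)
    (k : ℕ) : OrdGE (n + k) ((Dv V)^[k] f) := by
  induction k with
  | zero => simpa using hf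
  | succ j ih =>
      rw [Function.iterate_succ_apply']
      have := OrdGE_Dv V hV ih
      exact this.mono (by omega)

lemma Dv_iterate_add (k : ℕ) (f g : O R N) :
    (Dv V)^[k] (f + g) = (Dv V)^[k] f + (Dv V)^[k] g := by
  induction k generalizing f g with
  | zero => rfl
  | succ j ih =>
      rw [Function.iterate_succ_apply, Dv_add, ih, Function.iterate_succ_apply,
        Function.iterate_succ_apply]

lemma Dv_iterate_zero (k : ℕ) : (Dv V)^[k] (0 : O R N) = 0 := by
  induction k with
  | zero => rfl
  | succ j ih => rw [Function.iterate_succ_apply, Dv_zero, ih]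


end Sternberg

namespace Sternberg

variable {N : ℕ} (V : Fin N → O ℝ N)

/-- `D^k/k!` -/
def Ek (k : ℕ) (f : O ℝ N) : O ℝ N := (k.factorial : ℝ)⁻¹ • (Dv V)^[k] f

lemma Ek_zero_idx (f : O ℝ N) : Ek V 0 f = f := by
  unfold Ek
  simp

lemma Ek_succ (k : ℕ) (f : O ℝ N) :
    Ek V (k + 1) f = (((k : ℝ) + 1))⁻¹ • Dv V (Ek V k f) := by
  unfold Ek
  rw [Function.iterate_succ_apply', Dv_smul, smul_smul]
  congr 1
  rw [Nat.factorial_succ]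
  push_cast
  rw [mul_inv]

lemma Dv_Ek (k : ℕ) (f : O ℝ N) :
    Dv V (Ek V k f) = ((k : ℝ) + 1) • Ek V (k + 1) f := by
  rw [Ek_succ, smul_smul, mul_inv_cancel₀ (by positivity), one_smul]

lemma Ek_add (k : ℕ) (f g : O ℝ N) : Ek V k (f + g) = Ek V k f + Ek V k g := by
  unfold Ek
  rw [Dv_iterate_add, smul_add]

lemma Ek_zero (k : ℕ) : Ek V k (0 : O ℝ N) = 0 := by
  unfold Ek
  rw [Dv_iterate_zero, smul_zero]

lemma Ek_one_succ (k : ℕ) : Ek V (k + 1) (1 : O ℝ N) = 0 := by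
  unfold Ek
  rw [Function.iterate_succ_apply, Dv_one, Dv_iterate_zero, smul_zero]

lemma Ek_C_succ (k : ℕ) (c : ℝ) : Ek V (k + 1) (MvPowerSeries.C (σ := Fin N) (R := ℝ) c) = 0 := by
  unfold Ek
  rw [Function.iterate_succ_apply, Dv_C, Dv_iterate_zero, smul_zero]

lemma coeff_Ek_eq_zero (hV : ∀ i, OrdGE 2 (V i)) {k : ℕ} {m : Fin N →₀ ℕ}
    (hm : deg m < k) (f : O ℝ N) : coeff (R := ℝ) m (Ek V k f) = 0 := by
  unfold Ek
  rw [MvPowerSeries.coeff_smul]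
  have h0 : OrdGE 0 f := fun m hm => by omega
  rw [OrdGE_Dv_iterate V hV h0 k m (by omega), mul_zero]

lemma coeff_Ek_ordGE (hV : ∀ i, OrdGE 2 (V i)) {k n : ℕ} {f : O ℝ N} (hf : OrdGE n f) :
    OrdGE n (Ek V k f) := by
  intro m hm
  unfold Ek
  rw [MvPowerSeries.coeff_smul, OrdGE_Dv_iterate V hV hf k m (by omega), mul_zero]

lemma Ek_mul (k : ℕ) (f g : O ℝ N) :
    Ek V k (f * g) = ∑ p ∈ antidiagonal k, Ek V p.1 f * Ek V p.2 g := by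
  induction k with
  | zero =>
      rw [Finset.Nat.antidiagonal_zero, Finset.sum_singleton, Ek_zero_idx, Ek_zero_idx,
        Ek_zero_idx]
  | succ k ih =>
      have hA : ∑ p ∈ antidiagonal k, Dv V (Ek V p.1 f) * Ek V p.2 g
          = ∑ q ∈ antidiagonal (k + 1), (q.1 : ℝ) • (Ek V q.1 f * Ek V q.2 g) := by
        rw [Finset.Nat.sum_antidiagonal_succ
          (f := fun q => (q.1 : ℝ) • (Ek V q.1 f * Ek V q.2 g))]
        simp only [Nat.cast_zero, zero_smul, zero_add, Nat.cast_add, Nat.cast_one]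
        refine Finset.sum_congr rfl fun p _ => ?_
        rw [Dv_Ek, smul_mul_assoc]
      have hB : ∑ p ∈ antidiagonal k, Ek V p.1 f * Dv V (Ek V p.2 g)
          = ∑ q ∈ antidiagonal (k + 1), (q.2 : ℝ) • (Ek V q.1 f * Ek V q.2 g) := by
        rw [Finset.Nat.sum_antidiagonal_succ'
          (f := fun q => (q.2 : ℝ) • (Ek V q.1 f * Ek V q.2 g))]
        simp only [Nat.cast_zero, zero_smul, zero_add, Nat.cast_add, Nat.cast_one]
        refine Finset.sum_congr rfl fun p _ => ?_
        rw [Dv_Ek, mul_smul_comm]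
      rw [Ek_succ, ih, Dv_sum]
      have hsplit : ∑ p ∈ antidiagonal k, Dv V (Ek V p.1 f * Ek V p.2 g)
          = ∑ q ∈ antidiagonal (k + 1), ((k : ℝ) + 1) • (Ek V q.1 f * Ek V q.2 g) := by
        have : ∀ p ∈ antidiagonal k, Dv V (Ek V p.1 f * Ek V p.2 g)
            = Dv V (Ek V p.1 f) * Ek V p.2 g + Ek V p.1 f * Dv V (Ek V p.2 g) :=
          fun p _ => Dv_mul V _ _
        rw [Finset.sum_congr rfl this, Finset.sum_add_distrib, hA, hB,
          ← Finset.sum_add_distrib]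
        refine Finset.sum_congr rfl fun q hq => ?_
        rw [Finset.HasAntidiagonal.mem_antidiagonal] at hq
        rw [← add_smul]
        congr 1
        have : (q.1 : ℝ) + q.2 = ((q.1 + q.2 : ℕ) : ℝ) := by push_cast; ring
        rw [this, hq]
        push_cast; ring
      rw [hsplit, ← Finset.smul_sum, smul_smul, inv_mul_cancel₀ (by positivity), one_smul]

end Sternberg

namespace Sternberg

variable {N : ℕ} (V : Fin N → O ℝ N)

/-- the exponential `e^{tD}` of the derivation, as a family of power series -/
def Eexp (f : O ℝ N) : O (Polynomial ℝ) N :=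
  PS.mk fun m => ∑ k ∈ Finset.range (deg m + 1),
    Polynomial.monomial k (coeff (R := ℝ) m (Ek V k f))

lemma coeff_coeff_E (hV : ∀ i, OrdGE 2 (V i)) (f : O ℝ N) (m : Fin N →₀ ℕ) (k : ℕ) :
    (coeff (R := Polynomial ℝ) m (Eexp V f)).coeff k = coeff (R := ℝ) m (Ek V k f) := by
  rw [Eexp, coeff_mk, Polynomial.finset_sum_coeff]
  simp only [Polynomial.coeff_monomial]
  rw [Finset.sum_ite_eq' (Finset.range (deg m + 1)) k (fun j => coeff (R := ℝ) m (Ek V j f))]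
  split_ifs with h
  · rfl
  · rw [Finset.mem_range, not_lt] at h
    rw [coeff_Ek_eq_zero V hV (by omega)]

lemma Eexp_add (hV : ∀ i, OrdGE 2 (V i)) (f g : O ℝ N) :
    Eexp V (f + g) = Eexp V f + Eexp V g := by
  ext m k
  rw [map_add, Polynomial.coeff_add, coeff_coeff_E V hV, coeff_coeff_E V hV,
    coeff_coeff_E V hV, Ek_add, map_add]

lemma Eexp_zero (hV : ∀ i, OrdGE 2 (V i)) : Eexp V (0 : O ℝ N) = 0 := by
  ext m k
  rw [coeff_coeff_E V hV, Ek_zero, map_zero, map_zero, Polynomial.coeff_zero]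

lemma Eexp_one (hV : ∀ i, OrdGE 2 (V i)) : Eexp V (1 : O ℝ N) = 1 := by
  classical
  ext m k
  rw [coeff_coeff_E V hV, MvPowerSeries.coeff_one]
  cases k with
  | zero =>
      rw [Ek_zero_idx, MvPowerSeries.coeff_one]
      split_ifs <;> simp
  | succ j =>
      rw [Ek_one_succ, map_zero]
      split_ifs <;> simp [Polynomial.coeff_one]

lemma Eexp_C (hV : ∀ i, OrdGE 2 (V i)) (c : ℝ) :
    Eexp V (MvPowerSeries.C (σ := Fin N) (R := ℝ) c)
      = MvPowerSeries.C (σ := Fin N) (R := Polynomial ℝ) (Polynomial.C c) := by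
  classical
  ext m k
  rw [coeff_coeff_E V hV, MvPowerSeries.coeff_C]
  cases k with
  | zero =>
      rw [Ek_zero_idx, MvPowerSeries.coeff_C]
      split_ifs <;> simp
  | succ j =>
      rw [Ek_C_succ, map_zero]
      split_ifs <;> simp [Polynomial.coeff_C]

lemma Eexp_mul (hV : ∀ i, OrdGE 2 (V i)) (f g : O ℝ N) :
    Eexp V (f * g) = Eexp V f * Eexp V g := by
  ext m k
  rw [coeff_coeff_E V hV, Ek_mul, map_sum, MvPowerSeries.coeff_mul,
    Polynomial.finset_sum_coeff]
  have : ∀ p ∈ antidiagonal m,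
      (coeff (R := Polynomial ℝ) p.1 (Eexp V f) * coeff (R := Polynomial ℝ) p.2 (Eexp V g)).coeff k
        = ∑ q ∈ antidiagonal k, coeff (R := ℝ) p.1 (Ek V q.1 f) * coeff (R := ℝ) p.2 (Ek V q.2 g) := by
    intro p _
    rw [Polynomial.coeff_mul]
    exact Finset.sum_congr rfl fun q _ => by
      rw [coeff_coeff_E V hV, coeff_coeff_E V hV]
  rw [Finset.sum_congr rfl this, Finset.sum_comm]
  exact Finset.sum_congr rfl fun q _ => by rw [MvPowerSeries.coeff_mul]

/-- `Eexp` bundled as a ring homomorphism. -/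
def EexpHom (hV : ∀ i, OrdGE 2 (V i)) : O ℝ N →+* O (Polynomial ℝ) N where
  toFun := Eexp V
  map_one' := Eexp_one V hV
  map_mul' := Eexp_mul V hV
  map_zero' := Eexp_zero V hV
  map_add' := Eexp_add V hV

lemma EexpHom_apply (hV : ∀ i, OrdGE 2 (V i)) (f : O ℝ N) :
    EexpHom V hV f = Eexp V f := rfl

lemma evalAt_zero_E (f : O ℝ N) : evalAt 0 (Eexp V f) = f := by
  ext m
  rw [evalAt, MvPowerSeries.coeff_map, Polynomial.evalRingHom]
  show Polynomial.eval 0 (coeff (R := Polynomial ℝ) m (Eexp V f)) = coeff (R := ℝ) m f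
  rw [Eexp, coeff_mk, Polynomial.eval_finset_sum]
  simp only [Polynomial.eval_monomial]
  rw [Finset.sum_eq_single 0]
  · rw [pow_zero, mul_one, Ek_zero_idx]
  · intro j _ hj
    rw [zero_pow hj, mul_zero]
  · intro h
    simp at h

lemma coeff_evalAt_one_E (f : O ℝ N) (m : Fin N →₀ ℕ) :
    coeff (R := ℝ) m (evalAt 1 (Eexp V f)) = ∑ k ∈ Finset.range (deg m + 1), coeff (R := ℝ) m (Ek V k f) := by
  rw [evalAt, MvPowerSeries.coeff_map, Polynomial.evalRingHom]
  show Polynomial.eval 1 (coeff (R := Polynomial ℝ) m (Eexp V f)) = _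
  rw [Eexp, coeff_mk, Polynomial.eval_finset_sum]
  simp [Polynomial.eval_monomial]

lemma Ek_Dv (k : ℕ) (f : O ℝ N) :
    Ek V k (Dv V f) = ((k : ℝ) + 1) • Ek V (k + 1) f := by
  unfold Ek
  rw [← Function.iterate_succ_apply, smul_smul]
  congr 1
  rw [Nat.factorial_succ]
  push_cast
  rw [mul_inv, ← mul_assoc, mul_inv_cancel₀ (by positivity), one_mul]

lemma tder_E (hV : ∀ i, OrdGE 2 (V i)) (f : O ℝ N) :
    tder (Eexp V f) = Eexp V (Dv V f) := by
  ext m k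
  rw [tder, coeff_mk, Polynomial.coeff_derivative, coeff_coeff_E V hV,
    coeff_coeff_E V hV, Ek_Dv, MvPowerSeries.coeff_smul]
  ring

lemma coeff_E_eq_zero (hV : ∀ i, OrdGE 2 (V i)) {n : ℕ} {f : O ℝ N} (hf : OrdGE n f)
    {m : Fin N →₀ ℕ} (hm : deg m < n) : coeff (R := Polynomial ℝ) m (Eexp V f) = 0 := by
  apply Polynomial.ext; intro k
  rw [coeff_coeff_E V hV, coeff_Ek_ordGE V hV hf m hm, Polynomial.coeff_zero]

end Sternberg

namespace Sternberg

variable {R : Type*} [CommRing R] {N : ℕ}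

lemma prod_X_pow_eq_monomial (k : Fin N →₀ ℕ) :
    (∏ i, (X i : O R N) ^ k i) = MvPowerSeries.monomial (σ := Fin N) (R := R) k 1 := by
  classical
  have huniv : ∑ i, Finsupp.single i (k i) = k := by
    have h := Finsupp.sum_single k
    rwa [Finsupp.sum_fintype _ _ (fun i => Finsupp.single_zero i)] at h
  calc (∏ i, (X i : O R N) ^ k i)
      = ∏ i, MvPowerSeries.monomial (σ := Fin N) (R := R) (Finsupp.single i (k i)) 1 := by
        refine Finset.prod_congr rfl fun i _ => ?_
        rw [MvPowerSeries.X_pow_eq]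
    _ = MvPowerSeries.monomial (σ := Fin N) (R := R) (∑ i, Finsupp.single i (k i)) 1 := by
        induction (Finset.univ : Finset (Fin N)) using Finset.induction with
        | empty => simp
        | insert _ _ hx ih =>
            rw [Finset.prod_insert hx, Finset.sum_insert hx, ih,
              MvPowerSeries.monomial_mul_monomial, one_mul]
    _ = MvPowerSeries.monomial (σ := Fin N) (R := R) k 1 := by rw [huniv]

variable (V : Fin N → O ℝ N)

/-- the crucial compatibility: substitution of the exponential family in a constant family
equals the exponential of the substituted series -/
lemma psubst_E (hV : ∀ i, OrdGE 2 (V i)) (g : O ℝ N) :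
    psubst (fun i => Eexp V (X i)) (toPoly g) = Eexp V g := by
  classical
  apply MvPowerSeries.ext; intro m
  set d := deg m with hd
  set K := Finset.Iic (Finsupp.equivFunOnFinite.symm fun _ : Fin N => deg m) with hK
  set gK : O ℝ N := ∑ k ∈ K, MvPowerSeries.C (σ := Fin N) (R := ℝ) (coeff (R := ℝ) k g) * ∏ i, (X i : O ℝ N) ^ k i
    with hgK
  have hmemK : ∀ k' : Fin N →₀ ℕ, deg k' ≤ d → k' ∈ K := by
    intro k' hk'
    rw [hK, Finset.mem_Iic, Finsupp.le_def]
    intro i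
    simp only [Finsupp.coe_equivFunOnFinite_symm]
    exact le_trans (le_deg i k') hk'
  have hcoeff_gK : ∀ k' : Fin N →₀ ℕ, deg k' ≤ d → coeff (R := ℝ) k' gK = coeff (R := ℝ) k' g := by
    intro k' hk'
    rw [hgK, map_sum]
    have : ∀ k ∈ K, coeff (R := ℝ) k' (MvPowerSeries.C (σ := Fin N) (R := ℝ) (coeff (R := ℝ) k g) * ∏ i, (X i : O ℝ N) ^ k i)
        = if k = k' then coeff (R := ℝ) k g else 0 := by
      intro k _
      rw [prod_X_pow_eq_monomial, MvPowerSeries.coeff_C_mul, MvPowerSeries.coeff_monomial]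
      split_ifs with h1 h2 h2
      · rw [mul_one]
      · exact absurd h1.symm h2
      · exact absurd h2.symm h1
      · rw [mul_zero]
    rw [Finset.sum_congr rfl this, Finset.sum_ite_eq' K k' (fun k => coeff (R := ℝ) k g),
      if_pos (hmemK k' hk')]
  have hr : OrdGE (d + 1) (g - gK) := by
    intro m' hm'
    rw [map_sub, hcoeff_gK m' (by omega), sub_self]
  have hsplit : Eexp V g = Eexp V gK + Eexp V (g - gK) := by
    rw [← Eexp_add V hV, add_sub_cancel]
  have hEgK : Eexp V (∑ k ∈ K, MvPowerSeries.C (σ := Fin N) (R := ℝ) (coeff (R := ℝ) k g) * ∏ i, (X i : O ℝ N) ^ k i)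
      = ∑ k ∈ K, MvPowerSeries.C (σ := Fin N) (R := Polynomial ℝ) (Polynomial.C (coeff (R := ℝ) k g))
          * ∏ i, (Eexp V (X i)) ^ k i := by
    rw [show Eexp V = ⇑(EexpHom V hV) from rfl, map_sum]
    refine Finset.sum_congr rfl fun k _ => ?_
    rw [map_mul, map_prod]
    congr 1
    · exact Eexp_C V hV _
    · exact Finset.prod_congr rfl fun i _ => by rw [map_pow]
  have hL : coeff (R := Polynomial ℝ) m (psubst (fun i => Eexp V (X i)) (toPoly g))
      = ∑ k ∈ K, coeff (R := Polynomial ℝ) k (toPoly g)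
          * coeff (R := Polynomial ℝ) m (∏ i, (Eexp V (X i)) ^ k i) := rfl
  rw [hL, hsplit, map_add, coeff_E_eq_zero V hV hr (by omega), add_zero, hgK, hEgK,
    map_sum (coeff (R := Polynomial ℝ) m)
    (fun k => MvPowerSeries.C (σ := Fin N) (R := Polynomial ℝ) (Polynomial.C (coeff (R := ℝ) k g))
          * ∏ i, (Eexp V (X i)) ^ k i) K]
  apply Finset.sum_congr rfl
  intro k hk
  rw [MvPowerSeries.coeff_C_mul, toPoly, MvPowerSeries.coeff_map]

end Sternberg

namespace Sternberg

variable {N : ℕ}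

lemma coeff_Dv (W : Fin N → O ℝ N) (f : O ℝ N) (m : Fin N →₀ ℕ) :
    coeff (R := ℝ) m (Dv W f)
      = ∑ i, ∑ p ∈ antidiagonal m, coeff (R := ℝ) p.1 (W i) * coeff (R := ℝ) p.2 (pd i f) := by
  unfold Dv
  rw [map_sum]
  exact Finset.sum_congr rfl fun i _ => MvPowerSeries.coeff_mul _ _ _

lemma trunc_iterate (W W' : Fin N → O ℝ N) (hW : ∀ i, OrdGE 2 (W i))
    (hW' : ∀ i, OrdGE 2 (W' i)) (dd : ℕ)
    (hagree : ∀ i (m' : Fin N →₀ ℕ), deg m' < dd → coeff (R := ℝ) m' (W i) = coeff (R := ℝ) m' (W' i))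
    {n : ℕ} (f : O ℝ N) (hf : OrdGE n f) :
    ∀ (k : ℕ) (m : Fin N →₀ ℕ), deg m + 3 ≤ dd + n + k →
      coeff (R := ℝ) m ((Dv W)^[k] f) = coeff (R := ℝ) m ((Dv W')^[k] f) := by
  intro k
  induction k with
  | zero => intro m _; rfl
  | succ k ih =>
      intro m hm
      rw [Function.iterate_succ_apply', Function.iterate_succ_apply', coeff_Dv, coeff_Dv]
      refine Finset.sum_congr rfl fun i _ => ?_
      refine Finset.sum_congr rfl fun p hp => ?_
      rw [Finset.HasAntidiagonal.mem_antidiagonal] at hp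
      have hdeg : deg p.1 + deg p.2 = deg m := by rw [← deg_add, hp]
      by_cases hA : deg p.1 < 2
      · rw [hW i _ hA, hW' i _ hA, zero_mul, zero_mul]
      by_cases hB : deg p.2 + 1 < n + k
      · have h1 : coeff (R := ℝ) p.2 (pd i ((Dv W)^[k] f)) = 0 := by
          rw [coeff_pd, OrdGE_Dv_iterate W hW hf k _ (by rw [deg_add, deg_single]; omega),
            mul_zero]
        have h2 : coeff (R := ℝ) p.2 (pd i ((Dv W')^[k] f)) = 0 := by
          rw [coeff_pd, OrdGE_Dv_iterate W' hW' hf k _ (by rw [deg_add, deg_single]; omega),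
            mul_zero]
        rw [h1, h2, mul_zero, mul_zero]
      · have hWa : coeff (R := ℝ) p.1 (W i) = coeff (R := ℝ) p.1 (W' i) :=
          hagree i p.1 (by omega)
        have hpd : coeff (R := ℝ) p.2 (pd i ((Dv W)^[k] f)) = coeff (R := ℝ) p.2 (pd i ((Dv W')^[k] f)) := by
          rw [coeff_pd, coeff_pd, ih _ (by rw [deg_add, deg_single]; omega)]
        rw [hWa, hpd]

lemma trunc_Ek (W W' : Fin N → O ℝ N) (hW : ∀ i, OrdGE 2 (W i))
    (hW' : ∀ i, OrdGE 2 (W' i)) (dd : ℕ)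
    (hagree : ∀ i (m' : Fin N →₀ ℕ), deg m' < dd → coeff (R := ℝ) m' (W i) = coeff (R := ℝ) m' (W' i))
    {n : ℕ} (f : O ℝ N) (hf : OrdGE n f) (k : ℕ) (m : Fin N →₀ ℕ)
    (hm : deg m + 3 ≤ dd + n + k) :
    coeff (R := ℝ) m (Ek W k f) = coeff (R := ℝ) m (Ek W' k f) := by
  unfold Ek
  rw [MvPowerSeries.coeff_smul, MvPowerSeries.coeff_smul,
    trunc_iterate W W' hW hW' dd hagree f hf k m hm]

end Sternberg

namespace Sternberg

variable {N : ℕ} (Φ : Fin N → O ℝ N)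

/-- the degree-`d` correction term -/
def Hcorr (W : Fin N → O ℝ N) (d : ℕ) (i : Fin N) : O ℝ N :=
  PS.mk fun m => if deg m = d then
    coeff (R := ℝ) m (Φ i) - coeff (R := ℝ) m (X i) - ∑ k ∈ Finset.Icc 2 d, coeff (R := ℝ) m (Ek W k (X i))
  else 0

/-- successive polynomial approximations of the logarithm vector field -/
def Wseq : ℕ → Fin N → O ℝ N
  | 0 => fun _ => 0
  | d + 1 => fun i => Wseq d i + Hcorr Φ (Wseq d) d i

/-- the logarithmic vector field of `Φ` -/
def Vfield (i : Fin N) : O ℝ N := PS.mk fun m => coeff (R := ℝ) m (Wseq Φ (deg m + 1) i)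

lemma coeff_Wseq_ge (d : ℕ) (i : Fin N) (m : Fin N →₀ ℕ) (h : d ≤ deg m) :
    coeff (R := ℝ) m (Wseq Φ d i) = 0 := by
  induction d with
  | zero => rfl
  | succ e ih =>
      show coeff (R := ℝ) m (Wseq Φ e i + Hcorr Φ (Wseq Φ e) e i) = 0
      rw [map_add, ih (by omega), Hcorr, coeff_mk, if_neg (by omega), add_zero]

lemma coeff_Wseq_stable (d : ℕ) (i : Fin N) (m : Fin N →₀ ℕ) (h : deg m < d) :
    coeff (R := ℝ) m (Wseq Φ d i) = coeff (R := ℝ) m (Vfield Φ i) := by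
  rw [Vfield, coeff_mk]
  obtain ⟨e, rfl⟩ : ∃ e, d = (deg m + 1) + e := ⟨d - (deg m + 1), by omega⟩
  induction e with
  | zero => rfl
  | succ e ih =>
      show coeff (R := ℝ) m (Wseq Φ (deg m + 1 + e) i + Hcorr Φ (Wseq Φ (deg m + 1 + e)) (deg m + 1 + e) i) = _
      rw [map_add, Hcorr, coeff_mk, if_neg (by omega), add_zero, ih (by omega)]

lemma coeff_Hcorr_low (hΦ : TangentId Φ) (W : Fin N → O ℝ N) (d : ℕ) (i : Fin N)
    (m : Fin N →₀ ℕ) (h : deg m ≤ 1) : coeff (R := ℝ) m (Hcorr Φ W d i) = 0 := by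
  classical
  rw [Hcorr, coeff_mk]
  split_ifs with hdm
  · rcases Nat.le_one_iff_eq_zero_or_eq_one.mp h with h0 | h1
    · have hm0 : m = 0 := deg_eq_zero.mp h0
      subst hm0
      rw [← hdm, h0, show Finset.Icc 2 0 = ∅ from rfl, Finset.sum_empty,
        MvPowerSeries.coeff_zero_eq_constantCoeff_apply, MvPowerSeries.coeff_zero_eq_constantCoeff_apply,
        hΦ.1 i, MvPowerSeries.constantCoeff_X, sub_zero, sub_zero]
    · obtain ⟨j, rfl⟩ := deg_eq_one h1
      rw [← hdm, h1, show Finset.Icc 2 1 = ∅ from rfl, Finset.sum_empty, sub_zero,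
        hΦ.2 i j, MvPowerSeries.coeff_X]
      split_ifs with h1' h2' h2'
      · exact sub_self 1
      · exact absurd (by rw [h1']) h2'
      · exact absurd (Finsupp.single_left_injective one_ne_zero h2').symm h1'
      · exact sub_self 0
  · rfl

lemma ordGE_Wseq (hΦ : TangentId Φ) (d : ℕ) (i : Fin N) : OrdGE 2 (Wseq Φ d i) := by
  induction d with
  | zero => intro m _; rfl
  | succ e ih =>
      intro m hm
      show coeff (R := ℝ) m (Wseq Φ e i + Hcorr Φ (Wseq Φ e) e i) = 0
      rw [map_add, ih m hm, coeff_Hcorr_low Φ hΦ _ _ _ _ (by omega), add_zero]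

lemma ordGE_Vfield (hΦ : TangentId Φ) (i : Fin N) : OrdGE 2 (Vfield Φ i) := by
  intro m hm
  rw [Vfield, coeff_mk]
  exact ordGE_Wseq Φ hΦ _ i m hm

lemma Ek_one_f (V : Fin N → O ℝ N) (f : O ℝ N) : Ek V 1 f = Dv V f := by
  unfold Ek
  simp

/-- the key recursion property: at `t = 1` the flow of `Vfield Φ` reaches `Φ` -/
lemma evalAt_one_E_Vfield (hΦ : TangentId Φ) (i : Fin N) :
    evalAt 1 (Eexp (Vfield Φ) (X i)) = Φ i := by
  classical
  ext m
  rw [coeff_evalAt_one_E]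
  rcases Nat.eq_zero_or_pos (deg m) with h0 | hpos
  · have hm0 : m = 0 := deg_eq_zero.mp h0
    subst hm0
    rw [h0, Finset.range_one, Finset.sum_singleton, Ek_zero_idx,
      MvPowerSeries.coeff_zero_eq_constantCoeff_apply,
      MvPowerSeries.coeff_zero_eq_constantCoeff_apply,
      MvPowerSeries.constantCoeff_X, hΦ.1 i]
  · -- d ≥ 1
    set d := deg m with hd
    have hV2 : ∀ j, OrdGE 2 (Vfield Φ j) := ordGE_Vfield Φ hΦ
    have hsum : ∑ k ∈ Finset.range (d + 1), coeff (R := ℝ) m (Ek (Vfield Φ) k (X i))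
        = coeff (R := ℝ) m (X i) + coeff (R := ℝ) m (Vfield Φ i)
          + ∑ k ∈ Finset.Icc 2 d, coeff (R := ℝ) m (Ek (Vfield Φ) k (X i)) := by
      rw [Finset.range_eq_Ico, ← Finset.sum_Ico_consecutive _ (by omega : 0 ≤ 2) (by omega : 2 ≤ d + 1)]
      congr 1
      · rw [show Finset.Ico 0 2 = {0, 1} from rfl, Finset.sum_insert (by simp),
          Finset.sum_singleton, Ek_zero_idx, Ek_one_f, Dv_X]
    rw [hsum]
    have hVcoeff : coeff (R := ℝ) m (Vfield Φ i)
        = coeff (R := ℝ) m (Φ i) - coeff (R := ℝ) m (X i)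
          - ∑ k ∈ Finset.Icc 2 d, coeff (R := ℝ) m (Ek (Wseq Φ d) k (X i)) := by
      rw [Vfield, coeff_mk, ← hd]
      show coeff (R := ℝ) m (Wseq Φ d i + Hcorr Φ (Wseq Φ d) d i) = _
      rw [map_add, coeff_Wseq_ge Φ d i m (by omega), Hcorr, coeff_mk, if_pos rfl, zero_add]
    have htr : ∀ k ∈ Finset.Icc 2 d,
        coeff (R := ℝ) m (Ek (Wseq Φ d) k (X i)) = coeff (R := ℝ) m (Ek (Vfield Φ) k (X i)) := by
      intro k hk
      rw [Finset.mem_Icc] at hk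
      refine trunc_Ek (Wseq Φ d) (Vfield Φ) (fun j => ordGE_Wseq Φ hΦ d j) hV2 d
        (fun j m' hm' => coeff_Wseq_stable Φ d j m' hm') (X i) (OrdGE_X i) k m (by omega)
    rw [Finset.sum_congr rfl htr] at hVcoeff
    rw [hVcoeff]
    ring

end Sternberg

open Sternberg in
/-- Sternberg interpolation: a formal diffeomorphism `Φ` of `(ℝ^N, 0)`
tangent to the identity can be interpolated by a one-parameter family `Ψ` of formal
diffeomorphisms, with coefficients polynomial in `t`, with `Ψ_0 = Id`, `Ψ_1 = Φ`, and
`Ψ'_t = Ψ'_0 ∘ Ψ_t`. -/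
theorem sternberg_interpolation (N : ℕ) (Φ : Fin N → O ℝ N) (hΦ : TangentId Φ) :
    ∃ Ψ : Fin N → O (Polynomial ℝ) N,
      TangentId Ψ ∧
      (∀ i, evalAt 0 (Ψ i) = MvPowerSeries.X i) ∧
      (∀ i, evalAt 1 (Ψ i) = Φ i) ∧
      (∀ i, tder (Ψ i) = psubst Ψ (toPoly (evalAt 0 (tder (Ψ i))))) := by
  classical
  set V : Fin N → O ℝ N := Vfield Φ with hVdef
  have hV : ∀ i, OrdGE 2 (V i) := ordGE_Vfield Φ hΦ
  refine ⟨fun i => Eexp V (X i), ⟨?_, ?_⟩, ?_, ?_, ?_⟩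
  · -- constant coefficient zero
    intro i
    rw [← MvPowerSeries.coeff_zero_eq_constantCoeff_apply,
      coeff_E_eq_zero V hV (OrdGE_X i) (by simp [deg])]
  · -- linear coefficients
    intro i j
    apply Polynomial.ext; intro k
    rw [coeff_coeff_E V hV]
    cases k with
    | zero =>
        rw [Ek_zero_idx, MvPowerSeries.coeff_X]
        rcases eq_or_ne i j with rfl | hij
        · rw [if_pos rfl, if_pos rfl, Polynomial.coeff_one_zero]
        · rw [if_neg (fun h => hij (Finsupp.single_left_injective one_ne_zero h).symm),
            if_neg hij, Polynomial.coeff_zero]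
    | succ l =>
        have hzero : coeff (R := ℝ) (Finsupp.single j 1) (Ek V (l + 1) (X i)) = 0 := by
          cases l with
          | zero => rw [Ek_one_f, Dv_X]; exact hV i _ (by rw [deg_single]; omega)
          | succ l' => exact coeff_Ek_eq_zero V hV (by rw [deg_single]; omega) _
        rw [hzero]
        split_ifs
        · rw [Polynomial.coeff_one]; simp
        · rw [Polynomial.coeff_zero]
  · -- time 0
    intro i
    exact evalAt_zero_E V (X i)
  · -- time 1
    intro i
    exact evalAt_one_E_Vfield Φ hΦ i
  · -- the flow ODE
    intro i
    have h1 : tder (Eexp V (X i)) = Eexp V (V i) := by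
      rw [tder_E V hV, Dv_X]
    rw [h1, evalAt_zero_E, psubst_E V hV]
end
end

section
/- Interpolation in the isotropy group: let f be a function germ, let Φ be a diffeomorphism germ tangent to the identity with Φ*f = g·f for a unit g with g(0) = 1. Then there exist a one-parameter family of formal diffeomorphisms Φ_t and formal units g_t, with coefficients polynomial in t, such that Φ_0 = Id, Φ_1 = Φ, g_0 = 1, g_1 = g, and Φ_t* f = g_t · f for all t. -/
open MvPowerSeries Finset

noncomputable section

variable {R : Type*} [CommRing R] {N : ℕ}

section Core

variable {R : Type*} [CommRing R] {N : ℕ}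

/-- Total degree of a multi-index. -/
def degF {N : ℕ} (m : Fin N →₀ ℕ) : ℕ := ∑ i, m i

lemma degF_sum (m : Fin N →₀ ℕ) : (m.sum fun _ e => e) = degF m := by
  rw [degF, Finsupp.sum_fintype]; intro; rfl

lemma degF_add (u v : Fin N →₀ ℕ) : degF (u + v) = degF u + degF v := by
  simp [degF, Finset.sum_add_distrib]

lemma degF_eq_zero {m : Fin N →₀ ℕ} : degF m = 0 ↔ m = 0 := by
  constructor
  · intro h
    ext i
    have := Finset.sum_eq_zero_iff.mp h i (Finset.mem_univ i)
    simpa using this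
  · rintro rfl; simp [degF]

lemma apply_le_degF (m : Fin N →₀ ℕ) (i : Fin N) : m i ≤ degF m :=
  Finset.single_le_sum (f := fun j => m j) (fun _ _ => Nat.zero_le _) (Finset.mem_univ i)

lemma degF_single (i : Fin N) (n : ℕ) : degF (Finsupp.single i n) = n := by
  simp [degF, Finsupp.single_apply]

/-- The truncation index set used in `psubst`. -/
def Km {N : ℕ} (m : Fin N →₀ ℕ) : Finset (Fin N →₀ ℕ) :=
  Finset.Iic (Finsupp.equivFunOnFinite.symm fun _ => m.sum fun _ e => e)

lemma mem_Km {k m : Fin N →₀ ℕ} : k ∈ Km m ↔ ∀ i, k i ≤ degF m := by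
  simp [Km, Finset.mem_Iic, Finsupp.le_def, degF_sum]

lemma mem_Km_of_deg {k m : Fin N →₀ ℕ} (h : degF k ≤ degF m) : k ∈ Km m :=
  mem_Km.mpr fun i => le_trans (apply_le_degF k i) h

lemma self_mem_Km (m : Fin N →₀ ℕ) : m ∈ Km m := mem_Km_of_deg le_rfl

lemma coeff_psubst (Φ : Fin N → O R N) (f : O R N) (m : Fin N →₀ ℕ) :
    coeff m (psubst Φ f) =
      ∑ k ∈ Km m, coeff k f * coeff m (∏ i, Φ i ^ k i) := rfl

/-- Zero constant term for each component. -/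
def ZC (Φ : Fin N → O R N) : Prop := ∀ i, constantCoeff (Φ i) = 0


lemma prod_pow_split (F : Fin N → O R N) (e : Fin N → ℕ) {s : Finset (Fin N)}
    {a : Fin N} (ha : a ∈ s) (hea : e a ≠ 0) :
    ∏ i ∈ s, F i ^ e i = F a * ∏ i ∈ s, F i ^ (Function.update e a (e a - 1)) i := by
  rw [← Finset.mul_prod_erase s _ ha, ← Finset.mul_prod_erase s (fun i => F i ^ (Function.update e a (e a - 1)) i) ha]
  rw [Function.update_self, ← mul_assoc]
  congr 1
  · rw [← pow_succ']
    congr 1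
    omega
  · exact Finset.prod_congr rfl fun i hi =>
      by rw [Function.update_of_ne (Finset.ne_of_mem_erase hi)]

lemma sum_update_split (e : Fin N → ℕ) {s : Finset (Fin N)}
    {a : Fin N} (ha : a ∈ s) (hea : e a ≠ 0) :
    ∑ i ∈ s, (Function.update e a (e a - 1)) i + 1 = ∑ i ∈ s, e i := by
  rw [← Finset.add_sum_erase s _ ha, ← Finset.add_sum_erase s e ha, Function.update_self]
  have : ∑ i ∈ s.erase a, (Function.update e a (e a - 1)) i = ∑ i ∈ s.erase a, e i :=
    Finset.sum_congr rfl fun i hi => by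
      rw [Function.update_of_ne (Finset.ne_of_mem_erase hi)]
  omega

/-- Vanishing: a product of `> degF m` series with zero constant term has zero
`m`-th coefficient (even multiplied by anything). -/
lemma coeff_prod_mul_eq_zero (F : Fin N → O R N) (hF : ZC F) :
    ∀ (d : ℕ) (m : Fin N →₀ ℕ) (s : Finset (Fin N)) (e : Fin N → ℕ) (G : O R N),
      degF m ≤ d → degF m < ∑ i ∈ s, e i →
      coeff m ((∏ i ∈ s, F i ^ e i) * G) = 0 := by
  intro d
  induction d with
  | zero =>
    intro m s e G hmd hlt
    have hm : m = 0 := degF_eq_zero.mp (Nat.le_zero.mp hmd)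
    subst hm
    rw [coeff_zero_eq_constantCoeff]
    simp only [map_mul, map_prod, map_pow]
    obtain ⟨a, ha, hea⟩ : ∃ a ∈ s, e a ≠ 0 := by
      by_contra h
      push_neg at h
      rw [Finset.sum_eq_zero h] at hlt
      omega
    rw [Finset.prod_eq_zero ha]
    · ring
    · rw [hF a, zero_pow hea]
  | succ d ih =>
    intro m s e G hmd hlt
    obtain ⟨a, ha, hea⟩ : ∃ a ∈ s, e a ≠ 0 := by
      by_contra h
      push_neg at h
      rw [Finset.sum_eq_zero h] at hlt
      omega
    rw [prod_pow_split F e ha hea, mul_assoc, coeff_mul]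
    apply Finset.sum_eq_zero
    rintro ⟨u, v⟩ hp
    rw [Finset.HasAntidiagonal.mem_antidiagonal] at hp
    by_cases hu : u = 0
    · subst hu
      rw [coeff_zero_eq_constantCoeff_apply, hF a, zero_mul]
    · have hdu : 1 ≤ degF u := by
        rcases Nat.eq_zero_or_pos (degF u) with h | h
        · exact absurd (degF_eq_zero.mp h) hu
        · exact h
      have hdm : degF u + degF v = degF m := by rw [← degF_add, hp]
      have hsum := sum_update_split e ha hea
      rw [ih v s _ G (by omega) (by omega), mul_zero]

lemma coeff_prod_pow_eq_zero {F : Fin N → O R N} (hF : ZC F) {k m : Fin N →₀ ℕ}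
    (h : degF m < degF k) :
    coeff m (∏ i, F i ^ k i) = 0 := by
  have := coeff_prod_mul_eq_zero F hF (degF m) m Finset.univ (fun i => k i) 1 le_rfl
    (by simpa [degF] using h)
  rwa [mul_one] at this

/-- Stability: the truncation set in `psubst` can be replaced by any finset
containing all multi-indices of degree `≤ degF m`. -/
lemma coeff_psubst_eq_sum {F : Fin N → O R N} (hF : ZC F) (f : O R N)
    (m : Fin N →₀ ℕ) (S : Finset (Fin N →₀ ℕ))
    (hS : ∀ k, degF k ≤ degF m → k ∈ S) :
    coeff m (psubst F f) =
      ∑ k ∈ S, coeff k f * coeff m (∏ i, F i ^ k i) := by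
  have key : ∀ T : Finset (Fin N →₀ ℕ), (∀ k, degF k ≤ degF m → k ∈ T) →
      ∑ k ∈ T, coeff k f * coeff m (∏ i, F i ^ k i)
        = ∑ k ∈ T.filter (fun k => degF k ≤ degF m),
            coeff k f * coeff m (∏ i, F i ^ k i) := by
    intro T hT
    rw [Finset.sum_filter_of_ne]
    intro k _ hne
    by_contra hdk
    push_neg at hdk
    exact hne (by rw [coeff_prod_pow_eq_zero hF hdk, mul_zero])
  have hfilter : (Km m).filter (fun k => degF k ≤ degF m)
      = S.filter (fun k => degF k ≤ degF m) := by
    ext k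
    simp only [Finset.mem_filter]
    constructor
    · rintro ⟨_, h⟩; exact ⟨hS k h, h⟩
    · rintro ⟨_, h⟩; exact ⟨mem_Km_of_deg h, h⟩
  rw [coeff_psubst, key (Km m) (fun k h => mem_Km_of_deg h), hfilter, ← key S hS]

/-- The coefficient of `psubst F f` at `m` only depends on the coefficients of `f`
in degree `≤ degF m`. -/
lemma coeff_psubst_congr {F : Fin N → O R N} (hF : ZC F) {f f' : O R N} {D : ℕ}
    (h : ∀ k, degF k ≤ D → coeff k f = coeff k f')
    {m : Fin N →₀ ℕ} (hm : degF m ≤ D) :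
    coeff m (psubst F f) = coeff m (psubst F f') := by
  rw [coeff_psubst, coeff_psubst]
  apply Finset.sum_congr rfl
  intro k _
  by_cases hk : degF k ≤ degF m
  · rw [h k (le_trans hk hm)]
  · push_neg at hk
    rw [coeff_prod_pow_eq_zero hF hk, mul_zero, mul_zero]

lemma prod_X_pow (e : Fin N →₀ ℕ) :
    (∏ i, (MvPowerSeries.X i : O R N) ^ e i) = monomial e 1 := by
  have h1 : ∀ i : Fin N, (MvPowerSeries.X i : O R N) ^ e i
      = monomial (Finsupp.single i (e i)) 1 := by
    intro i
    rw [MvPowerSeries.X_pow_eq]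
  rw [Finset.prod_congr rfl fun i _ => h1 i]
  have h2 : ∀ (s : Finset (Fin N)),
      (∏ i ∈ s, (monomial (Finsupp.single i (e i)) 1 : O R N))
        = monomial (∑ i ∈ s, Finsupp.single i (e i)) 1 := by
    intro s
    induction s using Finset.induction with
    | empty => simp
    | insert _ _ hx ih =>
      rw [Finset.prod_insert hx, ih, Finset.sum_insert hx, monomial_mul_monomial, one_mul]
  rw [h2]
  have h3 : (∑ i : Fin N, Finsupp.single i (e i)) = e := by
    ext j
    rw [Finset.sum_apply']
    simp [Finsupp.single_apply]
  rw [h3]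

lemma coeff_prod_X_pow (k e : Fin N →₀ ℕ) :
    coeff k (∏ i, (MvPowerSeries.X i : O R N) ^ e i) = if k = e then 1 else 0 := by
  rw [prod_X_pow, coeff_monomial]

lemma psubst_add (F : Fin N → O R N) (a b : O R N) :
    psubst F (a + b) = psubst F a + psubst F b := by
  ext m
  rw [map_add, coeff_psubst, coeff_psubst, coeff_psubst, ← Finset.sum_add_distrib]
  apply Finset.sum_congr rfl
  intro k _
  rw [map_add, add_mul]

lemma psubst_zero (F : Fin N → O R N) : psubst F (0 : O R N) = 0 := by
  ext m
  rw [coeff_psubst]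
  simp

lemma psubst_C (F : Fin N → O R N) (c : R) :
    psubst F (MvPowerSeries.C c) = MvPowerSeries.C c := by
  ext m
  rw [coeff_psubst]
  rw [Finset.sum_eq_single (0 : Fin N →₀ ℕ)]
  · simp [coeff_C, coeff_one]
  · intro k _ hk
    rw [coeff_C, if_neg hk, zero_mul]
  · intro h
    exact absurd (mem_Km_of_deg (by simp [degF])) h

lemma psubst_one (F : Fin N → O R N) : psubst F (1 : O R N) = 1 := by
  have := psubst_C F (1 : R)
  rwa [map_one] at this

lemma constantCoeff_psubst (F : Fin N → O R N) (f : O R N) :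
    constantCoeff (psubst F f) = constantCoeff f := by
  rw [← coeff_zero_eq_constantCoeff_apply, coeff_psubst]
  rw [Finset.sum_eq_single (0 : Fin N →₀ ℕ)]
  · simp
  · intro k hk hne
    exfalso
    apply hne
    ext i
    exact Nat.le_zero.mp (by simpa [degF] using mem_Km.mp hk i)
  · intro h
    exact absurd (mem_Km_of_deg (by simp [degF])) h

lemma psubst_X {F : Fin N → O R N} (hF : ZC F) (i : Fin N) :
    psubst F (MvPowerSeries.X i) = F i := by
  ext m
  by_cases hm : m = 0
  · subst hm
    rw [coeff_zero_eq_constantCoeff_apply, coeff_zero_eq_constantCoeff_apply,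
      constantCoeff_psubst, constantCoeff_X, hF i]
  · rw [coeff_psubst, Finset.sum_eq_single (Finsupp.single i 1)]
    · rw [coeff_X, if_pos rfl, one_mul]
      have : (∏ j, F j ^ (Finsupp.single i 1) j) = F i := by
        refine Finset.prod_eq_single_of_mem i (Finset.mem_univ i) (fun j _ hj => ?_)
          |>.trans (by simp)
        rw [Finsupp.single_apply, if_neg (Ne.symm hj), pow_zero]
      rw [this]
    · intro k _ hk
      rw [coeff_X, if_neg hk, zero_mul]
    · intro h
      exfalso
      apply h
      apply mem_Km_of_deg
      rw [degF_single]
      have : degF m ≠ 0 := fun hh => hm (degF_eq_zero.mp hh)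
      omega

lemma prod_pow_add (F : Fin N → O R N) (u v : Fin N →₀ ℕ) :
    (∏ i, F i ^ (u + v) i) = (∏ i, F i ^ u i) * ∏ i, F i ^ v i := by
  rw [← Finset.prod_mul_distrib]
  apply Finset.prod_congr rfl
  intro i _
  rw [Finsupp.add_apply, pow_add]

lemma psubst_mul {F : Fin N → O R N} (hF : ZC F) (a b : O R N) :
    psubst F (a * b) = psubst F a * psubst F b := by
  ext m
  classical
  set T : (Fin N →₀ ℕ) × (Fin N →₀ ℕ) → R := fun p =>
    coeff p.1 a * coeff p.2 b * coeff m (∏ i, F i ^ (p.1 + p.2) i) with hT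
  have lhs_eq : coeff m (psubst F (a * b)) = ∑ p ∈ (Km m) ×ˢ (Km m), T p := by
    rw [coeff_psubst]
    have step1 : ∀ k ∈ Km m,
        coeff k (a * b) * coeff m (∏ i, F i ^ k i)
          = ∑ p ∈ Finset.HasAntidiagonal.antidiagonal k, T p := by
      intro k _
      rw [coeff_mul, Finset.sum_mul]
      apply Finset.sum_congr rfl
      rintro ⟨u, v⟩ hp
      rw [Finset.HasAntidiagonal.mem_antidiagonal] at hp
      simp only [hT, hp, mul_assoc]
    rw [Finset.sum_congr rfl step1]
    rw [← Finset.sum_biUnion]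
    · apply Finset.sum_subset
      · intro p hp
        rw [Finset.mem_biUnion] at hp
        obtain ⟨k, hk, hpk⟩ := hp
        rw [Finset.HasAntidiagonal.mem_antidiagonal] at hpk
        subst hpk
        rw [Finset.mem_product]
        constructor <;> rw [mem_Km] <;> intro i
        · exact le_trans (by simp) (mem_Km.mp hk i)
        · exact le_trans (by simp) (mem_Km.mp hk i)
      · intro p hp hnp
        have hs : p.1 + p.2 ∉ Km m := fun hc =>
          hnp (Finset.mem_biUnion.mpr ⟨p.1 + p.2, hc, Finset.HasAntidiagonal.mem_antidiagonal.mpr rfl⟩)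
        rw [mem_Km] at hs
        push_neg at hs
        obtain ⟨i, hi⟩ := hs
        have : degF m < degF (p.1 + p.2) := lt_of_lt_of_le hi (apply_le_degF _ i)
        rw [hT]
        simp only
        rw [coeff_prod_pow_eq_zero hF this, mul_zero]
    · intro k _ k' _ hkk'
      simp only [Finset.disjoint_left]
      intro p hp hp'
      rw [Finset.HasAntidiagonal.mem_antidiagonal] at hp hp'
      exact hkk' (hp ▸ hp')
  have rhs_eq : coeff m (psubst F a * psubst F b) = ∑ p ∈ (Km m) ×ˢ (Km m), T p := by
    rw [coeff_mul]
    have step1 : ∀ q ∈ Finset.HasAntidiagonal.antidiagonal m,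
        coeff q.1 (psubst F a) * coeff q.2 (psubst F b)
          = ∑ u ∈ Km m, ∑ v ∈ Km m,
              coeff u a * coeff v b
                * (coeff q.1 (∏ i, F i ^ u i) * coeff q.2 (∏ i, F i ^ v i)) := by
      rintro ⟨q1, q2⟩ hq
      rw [Finset.HasAntidiagonal.mem_antidiagonal] at hq
      have h1 : degF q1 ≤ degF m := by
        have := degF_add q1 q2
        rw [hq] at this
        omega
      have h2 : degF q2 ≤ degF m := by
        have := degF_add q1 q2
        rw [hq] at this
        omega
      rw [coeff_psubst_eq_sum hF a q1 (Km m) (fun k hk => mem_Km_of_deg (le_trans hk h1)),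
        coeff_psubst_eq_sum hF b q2 (Km m) (fun k hk => mem_Km_of_deg (le_trans hk h2)),
        Finset.sum_mul_sum]
      apply Finset.sum_congr rfl
      intro u _
      apply Finset.sum_congr rfl
      intro v _
      ring
    rw [Finset.sum_congr rfl step1, Finset.sum_comm]
    rw [Finset.sum_product]
    apply Finset.sum_congr rfl
    intro u hu
    rw [Finset.sum_comm]
    apply Finset.sum_congr rfl
    intro v hv
    rw [hT]
    simp only
    rw [prod_pow_add, coeff_mul, Finset.mul_sum]
  rw [lhs_eq, rhs_eq]

/-- `psubst` as a ring homomorphism (needs zero constant terms). -/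
def psubstHom (F : Fin N → O R N) (hF : ZC F) : O R N →+* O R N where
  toFun := psubst F
  map_one' := psubst_one F
  map_mul' := psubst_mul hF
  map_zero' := psubst_zero F
  map_add' := psubst_add F

lemma psubst_sum {F : Fin N → O R N} (hF : ZC F) {ι : Type*} (S : Finset ι) (h : ι → O R N) :
    psubst F (∑ k ∈ S, h k) = ∑ k ∈ S, psubst F (h k) :=
  map_sum (psubstHom F hF) h S

lemma psubst_pow {F : Fin N → O R N} (hF : ZC F) (a : O R N) (n : ℕ) :
    psubst F (a ^ n) = (psubst F a) ^ n :=
  map_pow (psubstHom F hF) a n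

lemma psubst_prod {F : Fin N → O R N} (hF : ZC F) {ι : Type*} (S : Finset ι) (h : ι → O R N) :
    psubst F (∏ k ∈ S, h k) = ∏ k ∈ S, psubst F (h k) :=
  map_prod (psubstHom F hF) h S

lemma psubst_id (f : O R N) : psubst (fun i => (MvPowerSeries.X i : O R N)) f = f := by
  ext m
  rw [coeff_psubst, Finset.sum_eq_single m]
  · rw [coeff_prod_X_pow, if_pos rfl, mul_one]
  · intro k _ hk
    rw [coeff_prod_X_pow, if_neg (Ne.symm hk), mul_zero]
  · intro h
    exact absurd (self_mem_Km m) h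

lemma psubst_poly {F : Fin N → O R N} (hF : ZC F) (S : Finset (Fin N →₀ ℕ)) (c : (Fin N →₀ ℕ) → R) :
    psubst F (∑ k ∈ S, MvPowerSeries.C (c k) * ∏ i, (MvPowerSeries.X i : O R N) ^ k i)
      = ∑ k ∈ S, MvPowerSeries.C (c k) * ∏ i, F i ^ k i := by
  rw [psubst_sum hF]
  apply Finset.sum_congr rfl
  intro k _
  rw [psubst_mul hF, psubst_prod hF, psubst_C]
  congr 1
  apply Finset.prod_congr rfl
  intro i _
  rw [psubst_pow hF, psubst_X hF]

lemma coeff_trunc_poly (f : O R N) (m k : Fin N →₀ ℕ) :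
    coeff k (∑ k' ∈ Km m, MvPowerSeries.C (coeff k' f)
        * ∏ i, (MvPowerSeries.X i : O R N) ^ k' i)
      = if k ∈ Km m then coeff k f else 0 := by
  rw [map_sum]
  have step : ∀ k' ∈ Km m,
      coeff k (MvPowerSeries.C (coeff k' f)
          * ∏ i, (MvPowerSeries.X i : O R N) ^ k' i)
        = if k' = k then coeff k f else 0 := by
    intro k' _
    rw [prod_X_pow]
    have : MvPowerSeries.C (coeff k' f) * monomial k' (1 : R)
        = monomial k' (coeff k' f) := by
      rw [← monomial_zero_eq_C_apply, monomial_mul_monomial, zero_add, mul_one]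
    rw [this, coeff_monomial]
    by_cases h : k = k'
    · subst h; simp
    · rw [if_neg h, if_neg (Ne.symm h)]
  rw [Finset.sum_congr rfl step, Finset.sum_ite_eq']

lemma psubst_psubst {F G : Fin N → O R N} (hF : ZC F) (hG : ZC G) (f : O R N) :
    psubst F (psubst G f) = psubst (fun i => psubst F (G i)) f := by
  classical
  have hFG : ZC (fun i => psubst F (G i)) := fun i => by
    rw [constantCoeff_psubst]; exact hG i
  ext m
  set ftr : O R N := ∑ k' ∈ Km m, MvPowerSeries.C (coeff k' f)
      * ∏ i, (MvPowerSeries.X i : O R N) ^ k' i with hftr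
  have hcong : ∀ k, degF k ≤ degF m → coeff k f = coeff k ftr := by
    intro k hk
    rw [hftr, coeff_trunc_poly, if_pos (mem_Km_of_deg hk)]
  have step1 : coeff m (psubst F (psubst G f)) = coeff m (psubst F (psubst G ftr)) := by
    apply coeff_psubst_congr hF _ le_rfl
    intro k hk
    exact coeff_psubst_congr hG hcong hk
  have step2 : psubst G ftr = ∑ k ∈ Km m, MvPowerSeries.C (coeff k f)
      * ∏ i, G i ^ k i := psubst_poly hG _ _
  have step3 : psubst F (∑ k ∈ Km m, MvPowerSeries.C (coeff k f)
      * ∏ i, G i ^ k i) = ∑ k ∈ Km m, MvPowerSeries.C (coeff k f)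
      * ∏ i, (psubst F (G i)) ^ k i := by
    rw [psubst_sum hF]
    apply Finset.sum_congr rfl
    intro k _
    rw [psubst_mul hF, psubst_prod hF, psubst_C]
    congr 1
    exact Finset.prod_congr rfl fun i _ => psubst_pow hF _ _
  have step4 : (∑ k ∈ Km m, MvPowerSeries.C (coeff k f)
      * ∏ i, (psubst F (G i)) ^ k i) = psubst (fun i => psubst F (G i)) ftr :=
    (psubst_poly hFG _ _).symm
  rw [step1, step2, step3, step4]
  exact (coeff_psubst_congr hFG (fun k hk => (hcong k hk).symm) le_rfl)

lemma eq_single_of_degF_one {k : Fin N →₀ ℕ} (h : degF k = 1) :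
    ∃ i, k = Finsupp.single i 1 := by
  obtain ⟨i, hi⟩ : ∃ i, k i ≠ 0 := by
    by_contra hc
    push_neg at hc
    have : k = 0 := Finsupp.ext fun i => hc i
    rw [this] at h
    simp [degF] at h
  have hki : k i = 1 := by
    have := apply_le_degF k i
    omega
  refine ⟨i, Finsupp.ext fun j => ?_⟩
  rcases eq_or_ne j i with rfl | hj
  · rw [hki, Finsupp.single_apply, if_pos rfl]
  · rw [Finsupp.single_apply, if_neg (Ne.symm hj).elim]
    have hsplit : degF k = k i + ∑ l ∈ Finset.univ.erase i, k l := by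
      rw [degF, ← Finset.add_sum_erase _ _ (Finset.mem_univ i)]
    have hjle : k j ≤ ∑ l ∈ Finset.univ.erase i, k l :=
      Finset.single_le_sum (f := fun l => k l) (fun _ _ => Nat.zero_le _)
        (Finset.mem_erase.mpr ⟨hj, Finset.mem_univ j⟩)
    omega

lemma coeff_single_psubst {F : Fin N → O R N} (hF : ZC F) (f : O R N) (j : Fin N) :
    coeff (Finsupp.single j 1) (psubst F f)
      = ∑ i, coeff (Finsupp.single i 1) f * coeff (Finsupp.single j 1) (F i) := by
  classical
  set S : Finset (Fin N →₀ ℕ) :=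
    insert 0 (Finset.image (fun i => Finsupp.single i 1) Finset.univ) with hS
  have hSmem : ∀ k, degF k ≤ degF (Finsupp.single j 1) → k ∈ S := by
    intro k hk
    rw [degF_single] at hk
    interval_cases h : degF k
    · exact Finset.mem_insert.mpr (Or.inl (degF_eq_zero.mp h))
    · obtain ⟨i, rfl⟩ := eq_single_of_degF_one h
      exact Finset.mem_insert.mpr (Or.inr (Finset.mem_image.mpr ⟨i, Finset.mem_univ i, rfl⟩))
  rw [coeff_psubst_eq_sum hF f _ S hSmem, hS]
  have h0 : (0 : Fin N →₀ ℕ) ∉ Finset.image (fun i => Finsupp.single i 1) (Finset.univ : Finset (Fin N)) := by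
    rw [Finset.mem_image]
    rintro ⟨i, _, hi⟩
    exact one_ne_zero (Finsupp.single_eq_zero.mp hi)
  rw [Finset.sum_insert h0]
  have hz : coeff 0 f * coeff (Finsupp.single j 1) (∏ i, F i ^ (0 : Fin N →₀ ℕ) i) = 0 := by
    have : (∏ i, F i ^ (0 : Fin N →₀ ℕ) i) = 1 := by simp
    rw [this, coeff_one, if_neg (by simp [Finsupp.single_eq_zero]), mul_zero]
  rw [hz, zero_add]
  rw [Finset.sum_image (fun a _ b _ h => (Finsupp.single_left_inj (one_ne_zero)).mp h)]
  apply Finset.sum_congr rfl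
  intro i _
  congr 1
  have hprod : (∏ l, F l ^ (Finsupp.single i 1) l) = F i := by
    rw [Finset.prod_eq_single_of_mem i (Finset.mem_univ i) (fun l _ hl => by
      rw [Finsupp.single_apply, if_neg (Ne.symm hl), pow_zero]),
      Finsupp.single_eq_same, pow_one]
  rw [hprod]

end Core

section PolyFam

open Polynomial

/-- A sequence is polynomial in `n`. -/
def PolyF (c : ℕ → ℝ) : Prop := ∃ P : Polynomial ℝ, ∀ n : ℕ, c n = P.eval (n : ℝ)

lemma PolyF.const (r : ℝ) : PolyF (fun _ => r) := ⟨Polynomial.C r, fun n => by simp⟩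

lemma PolyF.add {c d : ℕ → ℝ} (hc : PolyF c) (hd : PolyF d) :
    PolyF (fun n => c n + d n) := by
  obtain ⟨P, hP⟩ := hc
  obtain ⟨Q, hQ⟩ := hd
  exact ⟨P + Q, fun n => show c n + d n = _ by rw [hP, hQ, Polynomial.eval_add]⟩

lemma PolyF.mul {c d : ℕ → ℝ} (hc : PolyF c) (hd : PolyF d) :
    PolyF (fun n => c n * d n) := by
  obtain ⟨P, hP⟩ := hc
  obtain ⟨Q, hQ⟩ := hd
  exact ⟨P * Q, fun n => show c n * d n = _ by rw [hP, hQ, Polynomial.eval_mul]⟩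

lemma PolyF.congr {c d : ℕ → ℝ} (hc : PolyF c) (h : ∀ n, d n = c n) : PolyF d := by
  obtain ⟨P, hP⟩ := hc
  exact ⟨P, fun n => (h n).trans (hP n)⟩

lemma PolyF.sum {ι : Type*} (S : Finset ι) (c : ι → ℕ → ℝ)
    (hc : ∀ i ∈ S, PolyF (c i)) : PolyF (fun n => ∑ i ∈ S, c i n) := by
  classical
  induction S using Finset.induction with
  | empty => simpa using PolyF.const 0
  | @insert a s hx ih =>
    have h1 := hc a (Finset.mem_insert_self a s)
    have h2 := ih fun i hi => hc i (Finset.mem_insert_of_mem hi)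
    exact (h1.add h2).congr fun n => Finset.sum_insert hx

/-- Discrete antiderivative of a polynomial. -/
lemma exists_discrete_antideriv :
    ∀ (d : ℕ) (P : Polynomial ℝ), P.natDegree ≤ d →
      ∃ Q : Polynomial ℝ, Q.comp (Polynomial.X + 1) - Q = P := by
  intro d
  induction d with
  | zero =>
    intro P hP
    refine ⟨Polynomial.C (P.coeff 0) * Polynomial.X, ?_⟩
    have hPC : P = Polynomial.C (P.coeff 0) := Polynomial.eq_C_of_natDegree_le_zero hP
    rw [Polynomial.mul_comp, Polynomial.C_comp, Polynomial.X_comp]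
    conv_rhs => rw [hPC]
    ring
  | succ d ih =>
    intro P hP
    by_cases hP' : P.natDegree ≤ d
    · exact ih P hP'
    push_neg at hP'
    have hdeg : P.natDegree = d + 1 := le_antisymm hP hP'
    have hP0 : P ≠ 0 := fun h => by simp [h] at hP'
    set B : Polynomial ℝ := (Polynomial.X + 1) ^ (d + 2) - Polynomial.X ^ (d + 2) with hB
    have hBcoeffs : ∀ m : ℕ, d + 1 < m → B.coeff m = 0 := by
      intro m hm
      rw [hB, Polynomial.coeff_sub, Polynomial.coeff_X_add_one_pow, Polynomial.coeff_X_pow]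
      rcases eq_or_ne m (d + 2) with rfl | hne
      · rw [if_pos rfl, Nat.choose_self]
        push_cast
        ring
      · rw [if_neg hne, Nat.choose_eq_zero_of_lt (by omega)]
        push_cast
        ring
    have hBdegle : B.degree ≤ ((d + 1 : ℕ) : WithBot ℕ) :=
      (Polynomial.degree_le_iff_coeff_zero B ((d + 1 : ℕ) : WithBot ℕ)).mpr fun m hm =>
        hBcoeffs m (by exact_mod_cast hm)
    have hBcoeff : B.coeff (d + 1) = (d + 2 : ℝ) := by
      rw [hB, Polynomial.coeff_sub, Polynomial.coeff_X_add_one_pow,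
        Polynomial.coeff_X_pow, if_neg (by omega), Nat.choose_succ_self_right]
      push_cast
      ring
    have hBne : ((d : ℝ) + 2) ≠ 0 := by positivity
    have hBnatdeg : B.natDegree = d + 1 := by
      apply le_antisymm (Polynomial.natDegree_le_iff_degree_le.mpr hBdegle)
      apply Polynomial.le_natDegree_of_ne_zero
      rw [hBcoeff]
      exact_mod_cast hBne
    have hB0 : B ≠ 0 := fun h => by
      rw [h, Polynomial.coeff_zero] at hBcoeff
      exact hBne hBcoeff.symm
    have hBlead : B.leadingCoeff = (d : ℝ) + 2 := by
      rw [Polynomial.leadingCoeff, hBnatdeg, hBcoeff]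
    set a : ℝ := P.leadingCoeff with ha
    have hane : a ≠ 0 := Polynomial.leadingCoeff_ne_zero.mpr hP0
    set c : ℝ := a / ((d : ℝ) + 2) with hc
    have hcne : c ≠ 0 := div_ne_zero hane hBne
    set Q₀ : Polynomial ℝ := Polynomial.C c * Polynomial.X ^ (d + 2) with hQ₀
    have hQ₀comp : Q₀.comp (Polynomial.X + 1) - Q₀ = Polynomial.C c * B := by
      rw [hQ₀, hB, Polynomial.mul_comp, Polynomial.C_comp, Polynomial.pow_comp,
        Polynomial.X_comp, mul_sub]
    have hCBdeg : (Polynomial.C c * B).degree = P.degree := by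
      rw [Polynomial.degree_C_mul hcne, Polynomial.degree_eq_natDegree hB0,
        Polynomial.degree_eq_natDegree hP0, hBnatdeg, hdeg]
    have hCBlead : (Polynomial.C c * B).leadingCoeff = a := by
      rw [Polynomial.leadingCoeff_mul, Polynomial.leadingCoeff_C, hBlead, hc]
      field_simp
    set P' : Polynomial ℝ := P - Polynomial.C c * B with hP'def
    have hP'deg : P'.natDegree ≤ d := by
      rcases eq_or_ne P' 0 with h | h
      · rw [h]
        simp
      · have hlt : P'.degree < P.degree :=
          Polynomial.degree_sub_lt hCBdeg.symm hP0 hCBlead.symm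
        rw [Polynomial.degree_eq_natDegree hP0, hdeg] at hlt
        have := (Polynomial.natDegree_lt_iff_degree_lt h).mpr (by exact_mod_cast hlt)
        omega
    obtain ⟨Q₁, hQ₁⟩ := ih P' hP'deg
    refine ⟨Q₀ + Q₁, ?_⟩
    rw [Polynomial.add_comp]
    have : Q₀.comp (Polynomial.X + 1) - Q₀ + (Q₁.comp (Polynomial.X + 1) - Q₁)
        = Polynomial.C c * B + P' := by rw [hQ₀comp, hQ₁]
    rw [hP'def] at this
    linear_combination this

/-- Polynomial sequences are stable under partial summation. -/
lemma PolyF.partial_sum {c : ℕ → ℝ} (hc : PolyF c) :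
    PolyF (fun n => ∑ j ∈ Finset.range n, c j) := by
  obtain ⟨P, hP⟩ := hc
  obtain ⟨Q, hQ⟩ := exists_discrete_antideriv P.natDegree P le_rfl
  refine ⟨Q - Polynomial.C (Q.eval 0), fun n => ?_⟩
  induction n with
  | zero => simp
  | succ n ih =>
    have ih' : (∑ j ∈ Finset.range n, c j)
        = Polynomial.eval (n : ℝ) (Q - Polynomial.C (Q.eval 0)) := ih
    show (∑ j ∈ Finset.range (n + 1), c j) = _
    rw [Finset.sum_range_succ, ih', hP]
    have hev := congrArg (Polynomial.eval (n : ℝ)) hQ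
    rw [Polynomial.eval_sub, Polynomial.eval_comp, Polynomial.eval_add,
      Polynomial.eval_X, Polynomial.eval_one] at hev
    simp only [Polynomial.eval_sub, Polynomial.eval_C]
    push_cast
    linarith [hev]

end PolyFam

section Eval

variable {N : ℕ}

lemma coeff_evalAt (r : ℝ) (m : Fin N →₀ ℕ) (F : O (Polynomial ℝ) N) :
    coeff m (evalAt r F) = (coeff m F).eval r :=
  MvPowerSeries.coeff_map _ _ _

lemma evalAt_prod_pow (r : ℝ) (Ψ : Fin N → O (Polynomial ℝ) N) (k : Fin N →₀ ℕ) :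
    evalAt (N := N) r (∏ i, Ψ i ^ k i) = ∏ i, (evalAt r (Ψ i)) ^ k i := by
  rw [map_prod]
  exact Finset.prod_congr rfl fun i _ => map_pow _ _ _

lemma evalAt_psubst (r : ℝ) (Ψ : Fin N → O (Polynomial ℝ) N) (F : O (Polynomial ℝ) N) :
    evalAt r (psubst Ψ F) = psubst (fun i => evalAt r (Ψ i)) (evalAt r F) := by
  ext m
  rw [coeff_evalAt, coeff_psubst, coeff_psubst, Polynomial.eval_finset_sum]
  apply Finset.sum_congr rfl
  intro k _
  rw [Polynomial.eval_mul, ← coeff_evalAt, ← coeff_evalAt, evalAt_prod_pow]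

lemma evalAt_toPoly (r : ℝ) (f : O ℝ N) : evalAt r (toPoly f) = f := by
  ext m
  rw [coeff_evalAt]
  show (Polynomial.C (coeff m f)).eval r = coeff m f
  rw [Polynomial.eval_C]

end Eval

section Main

variable {N : ℕ} (Φ : Fin N → O ℝ N)

/-- The `n`-th iterate of `Φ`. -/
def It (Φ : Fin N → O ℝ N) : ℕ → Fin N → O ℝ N
  | 0 => fun i => MvPowerSeries.X i
  | n + 1 => fun i => psubst (It Φ n) (Φ i)

lemma It_zc (hΦ : ZC Φ) : ∀ n, ZC (It Φ n)
  | 0 => fun i => constantCoeff_X i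
  | n + 1 => fun i => by
    show constantCoeff (psubst (It Φ n) (Φ i)) = 0
    rw [constantCoeff_psubst]
    exact hΦ i

lemma It_tangent (hΦ : TangentId Φ) : ∀ n, TangentId (It Φ n)
  | 0 => by
    constructor
    · exact fun i => constantCoeff_X i
    · intro i j
      show (coeff (Finsupp.single j 1)) (MvPowerSeries.X i : O ℝ N) = _
      rw [coeff_X]
      by_cases h : i = j
      · subst h
        rw [if_pos rfl, if_pos rfl]
      · rw [if_neg (fun hc => h ((Finsupp.single_left_inj one_ne_zero).mp hc).symm),
          if_neg h]
  | n + 1 => by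
    obtain ⟨h0, h1⟩ := It_tangent hΦ n
    constructor
    · exact It_zc Φ hΦ.1 (n + 1)
    · intro i j
      show coeff (Finsupp.single j 1) (psubst (It Φ n) (Φ i)) = _
      rw [coeff_single_psubst (It_zc Φ hΦ.1 n)]
      rw [Finset.sum_congr rfl fun l _ => by rw [hΦ.2 i l, h1 l j]]
      rw [Finset.sum_eq_single i]
      · rw [if_pos rfl, one_mul]
      · intro l _ hl
        rw [if_neg (Ne.symm hl).elim, zero_mul]
      · intro h
        exact absurd (Finset.mem_univ i) h

end Main

section Main2

variable {N : ℕ}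

/-- The multiplier at integer times. -/
def Gn (Φ : Fin N → O ℝ N) (g : O ℝ N) : ℕ → O ℝ N
  | 0 => 1
  | n + 1 => psubst (It Φ n) g * Gn Φ g n

lemma Gn_cc (Φ : Fin N → O ℝ N) (g : O ℝ N) (hg : constantCoeff g = 1) :
    ∀ n, constantCoeff (Gn Φ g n) = 1
  | 0 => map_one _
  | n + 1 => by
    show constantCoeff (psubst (It Φ n) g * Gn Φ g n) = 1
    rw [map_mul, constantCoeff_psubst, hg, Gn_cc Φ g hg n, one_mul]

lemma It_main (Φ : Fin N → O ℝ N) (hΦ : ZC Φ) (f g : O ℝ N)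
    (hpres : psubst Φ f = g * f) :
    ∀ n, psubst (It Φ n) f = Gn Φ g n * f
  | 0 => by
    show psubst (fun i => MvPowerSeries.X i) f = (1 : O ℝ N) * f
    rw [psubst_id, one_mul]
  | n + 1 => by
    show psubst (fun i => psubst (It Φ n) (Φ i)) f = _
    rw [← psubst_psubst (It_zc Φ hΦ n) hΦ f, hpres, psubst_mul (It_zc Φ hΦ n),
      It_main Φ hΦ f g hpres n]
    show _ = psubst (It Φ n) g * Gn Φ g n * f
    ring

/-- Coefficients of products of iterates are polynomial in the time `n`. -/
lemma polyProd (Φ : Fin N → O ℝ N) (hΦ : ZC Φ) (d : ℕ)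
    (hd : ∀ m : Fin N →₀ ℕ, degF m ≤ d → ∀ i, PolyF fun n => coeff m (It Φ n i)) :
    ∀ (L : ℕ) (s : Finset (Fin N)) (k : Fin N → ℕ), (∑ i ∈ s, k i) = L →
      ∀ m : Fin N →₀ ℕ, degF m + 1 ≤ d + L →
      PolyF fun n => coeff m (∏ i ∈ s, (It Φ n i) ^ k i) := by
  intro L
  induction L with
  | zero =>
    intro s k hk m _
    have hz : ∀ i ∈ s, k i = 0 := by
      intro i hi
      have : k i ≤ ∑ j ∈ s, k j :=
        Finset.single_le_sum (f := fun j => k j) (fun _ _ => Nat.zero_le _) hi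
      omega
    have : ∀ n : ℕ, coeff m (∏ i ∈ s, (It Φ n i) ^ k i) = coeff m (1 : O ℝ N) := by
      intro n
      congr 1
      rw [Finset.prod_congr rfl fun i hi => by rw [hz i hi, pow_zero]]
      exact Finset.prod_const_one
    exact (PolyF.const (coeff m (1 : O ℝ N))).congr this
  | succ L ih =>
    intro s k hk m hm
    obtain ⟨a, ha, hka⟩ : ∃ a ∈ s, k a ≠ 0 := by
      by_contra h
      push_neg at h
      rw [Finset.sum_eq_zero h] at hk
      omega
    set k' : Fin N → ℕ := Function.update k a (k a - 1) with hk'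
    have hsum' : (∑ i ∈ s, k' i) = L := by
      have h2 := sum_update_split k ha hka
      rw [← hk'] at h2
      omega
    have hsplit : ∀ n : ℕ,
        coeff m (∏ i ∈ s, (It Φ n i) ^ k i)
          = ∑ p ∈ Finset.HasAntidiagonal.antidiagonal m,
              coeff p.1 (It Φ n a) * coeff p.2 (∏ i ∈ s, (It Φ n i) ^ k' i) := by
      intro n
      rw [prod_pow_split (It Φ n) k ha hka, coeff_mul]
    refine (PolyF.sum (Finset.HasAntidiagonal.antidiagonal m)
      (fun p n => coeff p.1 (It Φ n a) * coeff p.2 (∏ i ∈ s, (It Φ n i) ^ k' i))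
      ?_).congr hsplit
    rintro ⟨u, v⟩ hp
    rw [Finset.HasAntidiagonal.mem_antidiagonal] at hp
    have hduv : degF u + degF v = degF m := by rw [← degF_add, hp]
    by_cases hu : u = 0
    · subst hu
      refine (PolyF.const 0).congr fun n => ?_
      show coeff (0 : Fin N →₀ ℕ) (It Φ n a) * coeff v (∏ i ∈ s, (It Φ n i) ^ k' i) = 0
      rw [coeff_zero_eq_constantCoeff_apply, It_zc Φ hΦ n a, zero_mul]
    by_cases hv : degF v < L
    · refine (PolyF.const 0).congr fun n => ?_
      show coeff u (It Φ n a) * coeff v (∏ i ∈ s, (It Φ n i) ^ k' i) = 0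
      have : coeff v ((∏ i ∈ s, (It Φ n i) ^ k' i) * 1) = 0 :=
        coeff_prod_mul_eq_zero (It Φ n) (It_zc Φ hΦ n) (degF v) v s k' 1 le_rfl
          (by omega)
      rw [mul_one] at this
      rw [this, mul_zero]
    push_neg at hv
    have hu1 : 1 ≤ degF u := by
      rcases Nat.eq_zero_or_pos (degF u) with h | h
      · exact absurd (degF_eq_zero.mp h) hu
      · exact h
    have h1 : PolyF fun n => coeff u (It Φ n a) := hd u (by omega) a
    have h2 : PolyF fun n => coeff v (∏ i ∈ s, (It Φ n i) ^ k' i) :=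
      ih s k' hsum' v (by omega)
    exact h1.mul h2

end Main2

section Main3

variable {N : ℕ}

lemma polyIt (Φ : Fin N → O ℝ N) (hΦ : TangentId Φ) :
    ∀ (d : ℕ) (m : Fin N →₀ ℕ), degF m ≤ d → ∀ i, PolyF fun n => coeff m (It Φ n i) := by
  intro d
  induction d with
  | zero =>
    intro m hm i
    have h0 : m = 0 := degF_eq_zero.mp (Nat.le_zero.mp hm)
    subst h0
    refine (PolyF.const 0).congr fun n => ?_
    rw [coeff_zero_eq_constantCoeff_apply, It_zc Φ hΦ.1 n i]
  | succ d ihd =>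
    intro m hm i
    by_cases hmd : degF m ≤ d
    · exact ihd m hmd i
    have hdm : degF m = d + 1 := by omega
    set H : O ℝ N := Φ i - MvPowerSeries.X i with hH
    have hH0 : ∀ k : Fin N →₀ ℕ, degF k ≤ 1 → coeff k H = 0 := by
      intro k hk
      rw [hH, map_sub]
      interval_cases hdk : degF k
      · have : k = 0 := degF_eq_zero.mp hdk
        subst this
        rw [coeff_zero_eq_constantCoeff_apply, coeff_zero_eq_constantCoeff_apply,
          hΦ.1 i, constantCoeff_X]
        ring
      · obtain ⟨j, rfl⟩ := eq_single_of_degF_one hdk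
        rw [hΦ.2 i j, coeff_X]
        by_cases h : i = j
        · subst h
          rw [if_pos rfl, if_pos rfl]
          ring
        · rw [if_neg (fun hc => h ((Finsupp.single_left_inj one_ne_zero).mp hc).symm),
            if_neg h]
          ring
    have hrec : ∀ n, coeff m (It Φ (n + 1) i)
        = coeff m (It Φ n i) + coeff m (psubst (It Φ n) H) := by
      intro n
      show coeff m (psubst (It Φ n) (Φ i)) = _
      have : Φ i = MvPowerSeries.X i + H := by rw [hH]; ring
      rw [this, psubst_add, psubst_X (It_zc Φ hΦ.1 n), map_add]
    have hpolyh : PolyF fun n => coeff m (psubst (It Φ n) H) := by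
      have hexp : ∀ n, coeff m (psubst (It Φ n) H)
          = ∑ k ∈ Km m, coeff k H * coeff m (∏ l, (It Φ n l) ^ k l) :=
        fun n => coeff_psubst _ _ _
      refine (PolyF.sum (Km m)
        (fun k n => coeff k H * coeff m (∏ l, (It Φ n l) ^ k l)) ?_).congr hexp
      intro k _
      by_cases hk0 : coeff k H = 0
      · refine (PolyF.const 0).congr fun n => ?_
        show coeff k H * coeff m (∏ l, (It Φ n l) ^ k l) = 0
        rw [hk0, zero_mul]
      have hL : 2 ≤ degF k := by
        by_contra h
        exact hk0 (hH0 k (by omega))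
      have hsum : (∑ l, (fun l => k l) l) = degF k := rfl
      have := polyProd Φ hΦ.1 d ihd (degF k) Finset.univ (fun l => k l) hsum m (by omega)
      exact (PolyF.const (coeff k H)).mul this
    have htel : ∀ n, coeff m (It Φ n i)
        = coeff m (It Φ 0 i) + ∑ j ∈ Finset.range n, coeff m (psubst (It Φ j) H) := by
      intro n
      induction n with
      | zero => simp
      | succ n ihn => rw [hrec n, ihn, Finset.sum_range_succ]; ring
    exact ((PolyF.const (coeff m (It Φ 0 i))).add hpolyh.partial_sum).congr htel

lemma polyGn (Φ : Fin N → O ℝ N) (hΦ : TangentId Φ) (g : O ℝ N)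
    (hg : constantCoeff g = 1) :
    ∀ (d : ℕ) (m : Fin N →₀ ℕ), degF m ≤ d → PolyF fun n => coeff m (Gn Φ g n) := by
  have hItPoly : ∀ (m : Fin N →₀ ℕ) (i : Fin N), PolyF fun n => coeff m (It Φ n i) :=
    fun m i => polyIt Φ hΦ (degF m) m le_rfl i
  have hprodPoly : ∀ (m k : Fin N →₀ ℕ), PolyF fun n => coeff m (∏ l, (It Φ n l) ^ k l) := by
    intro m k
    by_cases hk : degF k = 0
    · have : k = 0 := degF_eq_zero.mp hk
      subst this
      refine (PolyF.const (coeff m (1 : O ℝ N))).congr fun n => ?_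
      congr 1
      simp
    · exact polyProd Φ hΦ.1 (degF m) (fun m' hm' i => polyIt Φ hΦ (degF m) m' hm' i)
        (degF k) Finset.univ (fun l => k l) rfl m (by omega)
  have hsubg : ∀ (m : Fin N →₀ ℕ), PolyF fun n => coeff m (psubst (It Φ n) g) := by
    intro m
    refine (PolyF.sum (Km m)
      (fun k n => coeff k g * coeff m (∏ l, (It Φ n l) ^ k l))
      (fun k _ => (PolyF.const (coeff k g)).mul (hprodPoly m k))).congr
      fun n => coeff_psubst _ _ _
  intro d
  induction d with
  | zero =>
    intro m hm
    have h0 : m = 0 := degF_eq_zero.mp (Nat.le_zero.mp hm)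
    subst h0
    refine (PolyF.const 1).congr fun n => ?_
    rw [coeff_zero_eq_constantCoeff_apply, Gn_cc Φ g hg n]
  | succ d ihd =>
    intro m hm
    by_cases hmd : degF m ≤ d
    · exact ihd m hmd
    have hdm : degF m = d + 1 := by omega
    have h0m : ((0 : Fin N →₀ ℕ), m) ∈ Finset.HasAntidiagonal.antidiagonal m :=
      Finset.HasAntidiagonal.mem_antidiagonal.mpr (zero_add m)
    have hrec : ∀ n, coeff m (Gn Φ g (n + 1))
        = coeff m (Gn Φ g n)
          + ∑ p ∈ (Finset.HasAntidiagonal.antidiagonal m).erase ((0 : Fin N →₀ ℕ), m),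
              coeff p.1 (psubst (It Φ n) g) * coeff p.2 (Gn Φ g n) := by
      intro n
      show coeff m (psubst (It Φ n) g * Gn Φ g n) = _
      rw [coeff_mul, ← Finset.add_sum_erase _ _ h0m]
      congr 1
      rw [coeff_zero_eq_constantCoeff_apply, constantCoeff_psubst, hg, one_mul]
    have hpolyh : PolyF fun n =>
        ∑ p ∈ (Finset.HasAntidiagonal.antidiagonal m).erase ((0 : Fin N →₀ ℕ), m),
          coeff p.1 (psubst (It Φ n) g) * coeff p.2 (Gn Φ g n) := by
      apply PolyF.sum
      rintro ⟨u, v⟩ hp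
      have hne : (u, v) ≠ ((0 : Fin N →₀ ℕ), m) := Finset.ne_of_mem_erase hp
      have hmem : u + v = m := Finset.HasAntidiagonal.mem_antidiagonal.mp (Finset.mem_of_mem_erase hp)
      have hu : u ≠ 0 := by
        rintro rfl
        rw [zero_add] at hmem
        exact hne (by rw [hmem])
      have hdu : 1 ≤ degF u := by
        rcases Nat.eq_zero_or_pos (degF u) with h | h
        · exact absurd (degF_eq_zero.mp h) hu
        · exact h
      have hduv : degF u + degF v = degF m := by rw [← degF_add, hmem]
      exact (hsubg u).mul (ihd v (by omega))
    have htel : ∀ n, coeff m (Gn Φ g n)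
        = coeff m (Gn Φ g 0)
          + ∑ j ∈ Finset.range n,
              ∑ p ∈ (Finset.HasAntidiagonal.antidiagonal m).erase ((0 : Fin N →₀ ℕ), m),
                coeff p.1 (psubst (It Φ j) g) * coeff p.2 (Gn Φ g j) := by
      intro n
      induction n with
      | zero => simp
      | succ n ihn => rw [hrec n, ihn, Finset.sum_range_succ]; ring
    exact ((PolyF.const (coeff m (Gn Φ g 0))).add hpolyh.partial_sum).congr htel

end Main3

lemma poly_eq_of_nat {P Q : Polynomial ℝ} (h : ∀ n : ℕ, P.eval (n : ℝ) = Q.eval (n : ℝ)) :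
    P = Q := by
  have hroot : {x : ℝ | (P - Q).IsRoot x}.Infinite := by
    apply Set.infinite_of_injective_forall_mem (f := fun n : ℕ => (n : ℝ))
      (hi := Nat.cast_injective)
    intro n
    simp only [Set.mem_setOf_eq, Polynomial.IsRoot, Polynomial.eval_sub]
    rw [h n]
    ring
  have := Polynomial.eq_zero_of_infinite_isRoot _ hroot
  have h2 : P - Q = 0 := this
  linear_combination h2

theorem isotropy_interpolation' (N : ℕ) (f g : O ℝ N) (Φ : Fin N → O ℝ N)
    (hΦ : TangentId Φ) (hg : constantCoeff g = 1)
    (hpres : psubst Φ f = g * f) :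
    ∃ (Ψ : Fin N → O (Polynomial ℝ) N) (G : O (Polynomial ℝ) N),
      TangentId Ψ ∧
      (∀ i, evalAt 0 (Ψ i) = MvPowerSeries.X i) ∧
      (∀ i, evalAt 1 (Ψ i) = Φ i) ∧
      evalAt 0 G = 1 ∧
      evalAt 1 G = g ∧
      psubst Ψ (toPoly f) = G * toPoly f := by
  classical
  have h1 : ∀ (m : Fin N →₀ ℕ) (i : Fin N),
      ∃ P : Polynomial ℝ, ∀ n : ℕ, coeff m (It Φ n i) = P.eval (n : ℝ) :=
    fun m i => polyIt Φ hΦ (degF m) m le_rfl i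
  choose PΨ hPΨ using h1
  have h2 : ∀ m : Fin N →₀ ℕ,
      ∃ P : Polynomial ℝ, ∀ n : ℕ, coeff m (Gn Φ g n) = P.eval (n : ℝ) :=
    fun m => polyGn Φ hΦ g hg (degF m) m le_rfl
  choose PG hPG using h2
  set Ψ : Fin N → O (Polynomial ℝ) N := fun i => PS.mk fun m => PΨ m i with hΨdef
  set G : O (Polynomial ℝ) N := PS.mk fun m => PG m with hGdef
  have hcoeffΨ : ∀ (m : Fin N →₀ ℕ) (i : Fin N), coeff m (Ψ i) = PΨ m i :=
    fun m i => rfl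
  have hcoeffG : ∀ (m : Fin N →₀ ℕ), coeff m G = PG m := fun m => rfl
  have hevalΨ : ∀ (n : ℕ) (i : Fin N), evalAt ((n : ℕ) : ℝ) (Ψ i) = It Φ n i := by
    intro n i
    ext m
    rw [coeff_evalAt, hcoeffΨ]
    exact (hPΨ m i n).symm
  have hevalG : ∀ n : ℕ, evalAt ((n : ℕ) : ℝ) G = Gn Φ g n := by
    intro n
    ext m
    rw [coeff_evalAt, hcoeffG]
    exact (hPG m n).symm
  have hIt1 : ∀ i, It Φ 1 i = Φ i := by
    intro i
    show psubst (It Φ 0) (Φ i) = Φ i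
    have : It Φ 0 = fun j => (MvPowerSeries.X j : O ℝ N) := rfl
    rw [this, psubst_id]
  refine ⟨Ψ, G, ⟨?_, ?_⟩, ?_, ?_, ?_, ?_, ?_⟩
  · -- constant coefficients of Ψ vanish
    intro i
    rw [← coeff_zero_eq_constantCoeff_apply, hcoeffΨ]
    apply poly_eq_of_nat (Q := 0)
    intro n
    rw [← hPΨ 0 i n, coeff_zero_eq_constantCoeff_apply, It_zc Φ hΦ.1 n i]
    simp
  · -- linear coefficients of Ψ
    intro i j
    rw [hcoeffΨ]
    apply poly_eq_of_nat
    intro n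
    rw [← hPΨ _ i n, (It_tangent Φ hΦ n).2 i j]
    by_cases h : i = j
    · rw [if_pos h, if_pos h, Polynomial.eval_one]
    · rw [if_neg h, if_neg h, Polynomial.eval_zero]
  · -- Ψ at time 0
    intro i
    have := hevalΨ 0 i
    rw [Nat.cast_zero] at this
    rw [this]
    rfl
  · -- Ψ at time 1
    intro i
    have := hevalΨ 1 i
    rw [Nat.cast_one] at this
    rw [this, hIt1]
  · -- G at time 0
    have := hevalG 0
    rw [Nat.cast_zero] at this
    rw [this]
    rfl
  · -- G at time 1
    have := hevalG 1
    rw [Nat.cast_one] at this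
    rw [this]
    show psubst (It Φ 0) g * Gn Φ g 0 = g
    have h0 : It Φ 0 = fun j => (MvPowerSeries.X j : O ℝ N) := rfl
    have h1 : Gn Φ g 0 = 1 := rfl
    rw [h0, h1, psubst_id, mul_one]
  · -- the interpolation identity
    apply MvPowerSeries.ext
    intro m
    apply poly_eq_of_nat
    intro n
    have hL : (coeff m (psubst Ψ (toPoly f))).eval ((n : ℕ) : ℝ)
        = coeff m (Gn Φ g n * f) := by
      rw [← coeff_evalAt, evalAt_psubst]
      have hfun : (fun i => evalAt ((n : ℕ) : ℝ) (Ψ i)) = It Φ n :=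
        funext fun i => hevalΨ n i
      rw [hfun, evalAt_toPoly, It_main Φ hΦ.1 f g hpres n]
    have hR : (coeff m (G * toPoly f)).eval ((n : ℕ) : ℝ)
        = coeff m (Gn Φ g n * f) := by
      rw [← coeff_evalAt, map_mul, hevalG, evalAt_toPoly]
    rw [hL, hR]

/-- interpolation in the isotropy group: if `Φ` is tangent to the
identity and `Φ*f = g·f` with `g(0) = 1`, then there are a one-parameter family of
formal diffeomorphisms `Ψ_t` and formal units `G_t`, with coefficients polynomial in
`t`, with `Ψ_0 = Id`, `Ψ_1 = Φ`, `G_0 = 1`, `G_1 = g`, and `Ψ_t* f = G_t · f`. -/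
theorem isotropy_interpolation (N : ℕ) (f g : O ℝ N) (Φ : Fin N → O ℝ N)
    (hΦ : TangentId Φ) (hg : constantCoeff g = 1)
    (hpres : psubst Φ f = g * f) :
    ∃ (Ψ : Fin N → O (Polynomial ℝ) N) (G : O (Polynomial ℝ) N),
      TangentId Ψ ∧
      (∀ i, evalAt 0 (Ψ i) = MvPowerSeries.X i) ∧
      (∀ i, evalAt 1 (Ψ i) = Φ i) ∧
      evalAt 0 G = 1 ∧
      evalAt 1 G = g ∧
      psubst Ψ (toPoly f) = G * toPoly f := by
  exact isotropy_interpolation' N f g Φ hΦ hg hpres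
end
end
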